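/- arXiv:1701.05025 — 6 statements merged into one kernel-verified Lean document; each statement's English description precedes it below -/
import Mathlib

section
/- Let V and W be finite-dimensional real inner product spaces with dim W ≤ dim V − 2, and let β : V × V → W be a symmetric bilinear map. If β ⌀ β = μ · ⟨·,·⟩ ⌀ ⟨·,·⟩ for some real number μ ≠ 0, then μ > 0 and there exist a unit vector ξ ∈ W and a linear subspace V₁ ⊆ V with dim V₁ ≥ dim V − dim W + 1 such that β(x,y) = √μ · ⟨x,y⟩ ξ for all x ∈ V₁ and all y ∈ V. -/
open scoped RealInnerProductSpace
open Module

noncomputable section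

variable {V W : Type*}
  [NormedAddCommGroup V] [InnerProductSpace ℝ V] [FiniteDimensional ℝ V]
  [NormedAddCommGroup W] [InnerProductSpace ℝ W] [FiniteDimensional ℝ W]

/-- Kulkarni–Nomizu product of two `W`-valued symmetric bilinear maps, as a `(0,4)`-tensor. -/
def kn (β γ : V → V → W) (x₁ x₂ x₃ x₄ : V) : ℝ :=
  ⟪β x₁ x₃, γ x₂ x₄⟫ - ⟪β x₁ x₄, γ x₂ x₃⟫ + ⟪β x₂ x₄, γ x₁ x₃⟫ - ⟪β x₂ x₃, γ x₁ x₄⟫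

/-- Kulkarni–Nomizu product `⟨·,·⟩ ⌀ ⟨·,·⟩` of the inner product with itself. -/
def knG (x₁ x₂ x₃ x₄ : V) : ℝ :=
  2 * (⟪x₁, x₃⟫ * ⟪x₂, x₄⟫) - 2 * (⟪x₁, x₄⟫ * ⟪x₂, x₃⟫)

/-- `R(β) = (1/2) β ⌀ β`. -/
def Rt (β : V → V → W) (x₁ x₂ x₃ x₄ : V) : ℝ := (1 / 2) * kn β β x₁ x₂ x₃ x₄

/-- `Ric(β)(x,y) = trace of z ↦ R(β)(z,x,z,y)`. -/
def ric (β : V → V → W) (x y : V) : ℝ :=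
  ∑ i, Rt β (stdOrthonormalBasis ℝ V i) x (stdOrthonormalBasis ℝ V i) y

/-- `scal(β) = trace Ric(β)`. -/
def scal (β : V → V → W) : ℝ :=
  ∑ i, ric β (stdOrthonormalBasis ℝ V i) (stdOrthonormalBasis ℝ V i)

/-- `‖β‖²`, the squared Euclidean norm of a bilinear map. -/
def bnormSq (β : V → V → W) : ℝ :=
  ∑ i, ∑ j, ‖β (stdOrthonormalBasis ℝ V i) (stdOrthonormalBasis ℝ V j)‖ ^ 2

/-- `trace β = Σ_i β(e_i, e_i)`. -/
def btrace (β : V → V → W) : W :=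
  ∑ i, β (stdOrthonormalBasis ℝ V i) (stdOrthonormalBasis ℝ V i)

/-- Squared Euclidean norm of a `(0,4)`-tensor. -/
def tnormSq (T : V → V → V → V → ℝ) : ℝ :=
  ∑ i, ∑ j, ∑ l, ∑ m,
    (T (stdOrthonormalBasis ℝ V i) (stdOrthonormalBasis ℝ V j)
       (stdOrthonormalBasis ℝ V l) (stdOrthonormalBasis ℝ V m)) ^ 2

/-- Index of a selfadjoint endomorphism: the maximal dimension of a subspace on which
`x ↦ ⟪T x, x⟫` is negative definite (= number of negative eigenvalues with multiplicity). -/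
def negIdx (T : V →ₗ[ℝ] V) : ℕ :=
  sSup {d | ∃ U : Submodule ℝ V, finrank ℝ U = d ∧ ∀ x ∈ U, x ≠ 0 → ⟪T x, x⟫ < 0}

/-- Number of positive eigenvalues (with multiplicity) of a selfadjoint endomorphism. -/
def posIdx (T : V →ₗ[ℝ] V) : ℕ :=
  sSup {d | ∃ U : Submodule ℝ V, finrank ℝ U = d ∧ ∀ x ∈ U, x ≠ 0 → 0 < ⟪T x, x⟫}

/-- Schouten tensor `L(β)`. -/
def schouten (β : V → V → W) (x y : V) : ℝ :=
  (1 / ((finrank ℝ V : ℝ) - 2)) *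
    (ric β x y - scal β / (2 * ((finrank ℝ V : ℝ) - 1)) * ⟪x, y⟫)

/-- `L ⌀ ⟨·,·⟩` for a real-valued bilinear form `L`. -/
def knLG (L : V → V → ℝ) (x₁ x₂ x₃ x₄ : V) : ℝ :=
  L x₁ x₃ * ⟪x₂, x₄⟫ + L x₂ x₄ * ⟪x₁, x₃⟫ - L x₁ x₄ * ⟪x₂, x₃⟫ - L x₂ x₃ * ⟪x₁, x₄⟫

/-- Weyl tensor `W(β) = R(β) − L(β) ⌀ ⟨·,·⟩`. -/
def Wt (β : V → V → W) (x₁ x₂ x₃ x₄ : V) : ℝ :=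
  Rt β x₁ x₂ x₃ x₄ - knLG (schouten β) x₁ x₂ x₃ x₄

set_option linter.unusedSectionVars false
set_option maxHeartbeats 1000000



section FlatAux
open LinearMap Polynomial

variable {V₀ U₀ : Type*}
  [AddCommGroup V₀] [Module ℝ V₀] [FiniteDimensional ℝ V₀]
  [AddCommGroup U₀] [Module ℝ U₀] [FiniteDimensional ℝ U₀]

/-- If the rank of `A + t B` never exceeds the rank of `A`, then `B` maps the
kernel of `A` into the range of `A`. -/
theorem rank_max_mem_range
    (e : U₀ →ₗ[ℝ] U₀ →ₗ[ℝ] ℝ) (he : ∀ v : U₀, e v v = 0 → v = 0)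
    (A B : V₀ →ₗ[ℝ] U₀)
    (hmax : ∀ t : ℝ, finrank ℝ (LinearMap.range (A + t • B)) ≤
      finrank ℝ (LinearMap.range A))
    {ν : V₀} (hν : A ν = 0) : B ν ∈ LinearMap.range A := by
  by_contra hout
  set r : ℕ := finrank ℝ (LinearMap.range A) with hrdef
  let bA : Basis (Fin r) ℝ (LinearMap.range A) := Module.finBasis ℝ (LinearMap.range A)
  let w : Fin r → U₀ := fun i => (bA i : U₀)
  have hw_li : LinearIndependent ℝ w :=
    bA.linearIndependent.map' (LinearMap.range A).subtype (Submodule.ker_subtype _)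
  have hw_span : Submodule.span ℝ (Set.range w) = LinearMap.range A := by
    have h1 : Set.range w = ((LinearMap.range A).subtype) '' (Set.range bA) := by
      ext u; simp [w]
    rw [h1, ← Submodule.map_span, bA.span_eq, Submodule.map_subtype_top]
  have hc : ∀ i, ∃ v, A v = w i := fun i => (bA i).2
  choose c hc using hc
  -- the family of r+1 vectors
  set v0 : Fin (r + 1) → U₀ := Fin.snoc w (B ν) with hv0def
  set u0 : Fin (r + 1) → U₀ := Fin.snoc (fun i => B (c i)) 0 with hu0def
  have hv0li : LinearIndependent ℝ v0 := by
    rw [hv0def]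
    refine linearIndependent_fin_snoc.2 ⟨hw_li, ?_⟩
    rw [hw_span]; exact hout
  -- Gram-type matrices
  set M0 : Matrix (Fin (r + 1)) (Fin (r + 1)) ℝ := Matrix.of fun i j => e (v0 i) (v0 j)
    with hM0def
  set M1 : Matrix (Fin (r + 1)) (Fin (r + 1)) ℝ := Matrix.of fun i j => e (u0 i) (v0 j)
    with hM1def
  have hterm : ∀ (s : ℝ) (i j : Fin (r + 1)),
      e (v0 i + s • u0 i) (v0 j) = M0 i j + s * M1 i j := by
    intro s i j
    simp [hM0def, hM1def, map_add, map_smul, smul_eq_mul]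
  have hdet0 : M0.det ≠ 0 := by
    intro h0
    obtain ⟨lam, hlam0, hlam⟩ := Matrix.exists_vecMul_eq_zero_iff.2 h0
    have hs0 : ∑ i, lam i • v0 i = 0 := by
      apply he
      have h1 : ∀ j, e (∑ i, lam i • v0 i) (v0 j) = 0 := by
        intro j
        have h2 := congrFun hlam j
        simp only [Matrix.vecMul, dotProduct, hM0def, Matrix.of_apply,
          Pi.zero_apply] at h2
        rw [map_sum, LinearMap.sum_apply]
        rw [← h2]
        refine Finset.sum_congr rfl fun i _ => ?_
        rw [map_smul, LinearMap.smul_apply, smul_eq_mul]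
      have h3 : (e (∑ i, lam i • v0 i)) (∑ j, lam j • v0 j) =
          ∑ j, lam j * e (∑ i, lam i • v0 i) (v0 j) := by
        rw [map_sum]
        refine Finset.sum_congr rfl fun j _ => ?_
        rw [map_smul, smul_eq_mul]
      rw [h3]
      exact Finset.sum_eq_zero fun j _ => by rw [h1 j, mul_zero]
    have := Fintype.linearIndependent_iff.1 hv0li lam hs0
    exact hlam0 (funext this)
  -- the determinant polynomial
  have hPt : ∀ t : ℝ,
      ((Matrix.of fun i j => C (M0 i j) + X * C (M1 i j)).det).eval t
        = (Matrix.of fun i j => M0 i j + t * M1 i j).det := by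
    intro t
    have h1 : ∀ q : ℝ[X], q.eval t = (evalRingHom t) q := fun q => rfl
    rw [h1, RingHom.map_det]
    congr 1
    ext i j
    simp only [RingHom.mapMatrix_apply, Matrix.map_apply, Matrix.of_apply, map_add, map_mul,
      eval_C, eval_X, coe_evalRingHom, eval_add, eval_mul]
  set P : ℝ[X] := (Matrix.of fun i j => C (M0 i j) + X * C (M1 i j)).det with hPdef
  have hP : P ≠ 0 := by
    intro h
    have := hPt 0
    rw [h] at this
    simp only [eval_zero] at this
    apply hdet0
    rw [show M0 = Matrix.of fun i j => M0 i j + (0:ℝ) * M1 i j by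
      ext i j; rw [Matrix.of_apply]; ring]
    exact this.symm
  obtain ⟨t, ht⟩ : ∃ t : ℝ, t ∉ ({x | P.IsRoot x} ∪ {0} : Set ℝ) := by
    have hfin : ({x | P.IsRoot x} ∪ {0} : Set ℝ).Finite :=
      (Polynomial.finite_setOf_isRoot hP).union (Set.finite_singleton 0)
    exact hfin.infinite_compl.nonempty
  simp only [Set.mem_union, Set.mem_setOf_eq, Set.mem_singleton_iff, not_or] at ht
  obtain ⟨htroot, ht0⟩ := ht
  have hdet_t : (Matrix.of fun i j => M0 i j + t * M1 i j).det ≠ 0 := by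
    rw [← hPt t]; exact htroot
  -- the perturbed family is linearly independent
  have hli : LinearIndependent ℝ (fun i => v0 i + t • u0 i) := by
    rw [Fintype.linearIndependent_iff]
    intro g hg
    have hrow : ∀ j, ∑ i, g i * (M0 i j + t * M1 i j) = 0 := by
      intro j
      have h1 : e (∑ i, g i • (v0 i + t • u0 i)) (v0 j) = 0 := by rw [hg]; simp
      rw [map_sum, LinearMap.sum_apply] at h1
      rw [← h1]
      refine Finset.sum_congr rfl fun i _ => ?_
      rw [map_smul, LinearMap.smul_apply, smul_eq_mul, hterm]
    intro i
    by_contra hgi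
    have hgne : g ≠ 0 := fun h => hgi (by rw [h]; rfl)
    apply hdet_t
    refine Matrix.exists_vecMul_eq_zero_iff.1 ⟨g, hgne, ?_⟩
    funext j
    simp only [Matrix.vecMul, dotProduct, Matrix.of_apply, Pi.zero_apply]
    exact hrow j
  -- all the vectors lie in the range of A + t • B
  have hmem : ∀ i, v0 i + t • u0 i ∈ LinearMap.range (A + t • B) := by
    intro i
    induction i using Fin.lastCases with
    | last =>
      have h1 : v0 (Fin.last r) + t • u0 (Fin.last r) = B ν := by
        simp [hv0def, hu0def, Fin.snoc_last]
      rw [h1]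
      have h2 : B ν = t⁻¹ • ((A + t • B) ν) := by
        simp [hν, smul_smul, inv_mul_cancel₀ ht0]
      rw [h2]
      exact Submodule.smul_mem _ _ (LinearMap.mem_range_self _ ν)
    | cast i =>
      have h1 : v0 i.castSucc + t • u0 i.castSucc = (A + t • B) (c i) := by
        simp [hv0def, hu0def, Fin.snoc_castSucc, hc]
      rw [h1]
      exact LinearMap.mem_range_self _ (c i)
  have hcard : r + 1 ≤ finrank ℝ (LinearMap.range (A + t • B)) := by
    have h1 := finrank_span_eq_card hli
    have h2 : Submodule.span ℝ (Set.range fun i => v0 i + t • u0 i) ≤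
        LinearMap.range (A + t • B) :=
      Submodule.span_le.2 (by rintro _ ⟨i, rfl⟩; exact hmem i)
    have h3 := Submodule.finrank_mono h2
    rw [h1, Fintype.card_fin] at h3
    exact h3
  have := hmax t
  omega

/-- The key orthogonality identity for flat bilinear maps: if `T x₀ ν = 0` then
`T ν z` is `b`-orthogonal to the range of `T x₀`. -/
theorem flat_perp (T : V₀ →ₗ[ℝ] V₀ →ₗ[ℝ] U₀) (hsym : ∀ x y, T x y = T y x)
    (b : U₀ →ₗ[ℝ] U₀ →ₗ[ℝ] ℝ)
    (hflat : ∀ x y z w, b (T x z) (T y w) = b (T x w) (T y z))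
    {x₀ ν : V₀} (hν : T x₀ ν = 0) (z u : V₀) : b (T ν z) (T x₀ u) = 0 := by
  have e1 : T ν x₀ = 0 := (hsym ν x₀).trans hν
  have h1 := hflat ν x₀ z u
  have h3 := hflat ν x₀ z x₀
  have h4 := hflat ν u z u
  have h2 := hflat ν (x₀ + u) z (x₀ + u)
  have e2 : T u x₀ = T x₀ u := hsym u x₀
  simp only [map_add, LinearMap.add_apply, e1, e2, map_zero, LinearMap.zero_apply,
    zero_add] at h2
  rw [e1] at h3
  simp only [map_zero, LinearMap.zero_apply] at h3
  linarith

/-- Structure result from rank maximality and flatness. -/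
theorem flat_struct (T : V₀ →ₗ[ℝ] V₀ →ₗ[ℝ] U₀) (hsym : ∀ x y, T x y = T y x)
    (e : U₀ →ₗ[ℝ] U₀ →ₗ[ℝ] ℝ) (he : ∀ v : U₀, e v v = 0 → v = 0)
    (b : U₀ →ₗ[ℝ] U₀ →ₗ[ℝ] ℝ)
    (hflat : ∀ x y z w, b (T x z) (T y w) = b (T x w) (T y z)) :
    ∃ x₀ : V₀,
      (∀ x : V₀, finrank ℝ (LinearMap.range (T x)) ≤ finrank ℝ (LinearMap.range (T x₀))) ∧
      ∀ ν : V₀, T x₀ ν = 0 → ∀ z : V₀,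
        T ν z ∈ LinearMap.range (T x₀) ∧ ∀ u : V₀, b (T ν z) (T x₀ u) = 0 := by
  obtain ⟨x₀, hx₀⟩ : ∃ x₀ : V₀, finrank ℝ (LinearMap.range (T x₀)) =
      sSup (Set.range fun x => finrank ℝ (LinearMap.range (T x))) := by
    have hbdd : BddAbove (Set.range fun x => finrank ℝ (LinearMap.range (T x))) := by
      refine ⟨finrank ℝ U₀, ?_⟩
      rintro _ ⟨x, rfl⟩
      exact Submodule.finrank_le _
    obtain ⟨x₀, hx₀⟩ := Nat.sSup_mem (Set.range_nonempty _) hbdd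
    exact ⟨x₀, by simpa using hx₀⟩
  have hmax : ∀ x : V₀, finrank ℝ (LinearMap.range (T x)) ≤
      finrank ℝ (LinearMap.range (T x₀)) := by
    intro x
    rw [hx₀]
    apply le_csSup
    · refine ⟨finrank ℝ U₀, ?_⟩
      rintro _ ⟨y, rfl⟩
      exact Submodule.finrank_le _
    · exact ⟨x, rfl⟩
  refine ⟨x₀, hmax, fun ν hν z => ⟨?_, fun u => flat_perp T hsym b hflat hν z u⟩⟩
  have hAB : ∀ t : ℝ, T x₀ + t • T z = T (x₀ + t • z) := by
    intro t
    rw [map_add, map_smul]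
  have hmem := rank_max_mem_range e he (T x₀) (T z)
    (fun t => by rw [hAB t]; exact hmax _) hν
  rwa [hsym z ν] at hmem

end FlatAux



section Constructions

/-- The bilinear map `(x, y) ↦ (β x y, c ⟪x,y⟫)` into `W × ℝ`. -/
def auxT (β : V →ₗ[ℝ] V →ₗ[ℝ] W) (c : ℝ) : V →ₗ[ℝ] V →ₗ[ℝ] (W × ℝ) :=
  LinearMap.mk₂ ℝ (fun x y => (β x y, c * ⟪x, y⟫))
    (fun m₁ m₂ n => by
      simp only [map_add, LinearMap.add_apply, inner_add_left, Prod.mk_add_mk, mul_add])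
    (fun a m n => by
      simp only [map_smul, LinearMap.smul_apply, real_inner_smul_left, Prod.smul_mk,
        smul_eq_mul]
      ring_nf)
    (fun m n₁ n₂ => by
      simp only [map_add, inner_add_right, Prod.mk_add_mk, mul_add])
    (fun a m n => by
      simp only [map_smul, real_inner_smul_right, Prod.smul_mk, smul_eq_mul]
      ring_nf)

@[simp] theorem auxT_apply (β : V →ₗ[ℝ] V →ₗ[ℝ] W) (c : ℝ) (x y : V) :
    auxT β c x y = (β x y, c * ⟪x, y⟫) := rfl

/-- The symmetric bilinear form `⟪p₁,q₁⟫ + ε p₂ q₂` on `W × ℝ`. -/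
def auxB (ε : ℝ) : (W × ℝ) →ₗ[ℝ] (W × ℝ) →ₗ[ℝ] ℝ :=
  LinearMap.mk₂ ℝ (fun p q => ⟪p.1, q.1⟫ + ε * (p.2 * q.2))
    (fun m₁ m₂ n => by
      simp only [Prod.fst_add, Prod.snd_add, inner_add_left]
      ring)
    (fun a m n => by
      simp only [Prod.smul_fst, Prod.smul_snd, real_inner_smul_left, smul_eq_mul]
      ring)
    (fun m n₁ n₂ => by
      simp only [Prod.fst_add, Prod.snd_add, inner_add_right]
      ring)
    (fun a m n => by
      simp only [Prod.smul_fst, Prod.smul_snd, real_inner_smul_right, smul_eq_mul]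
      ring)

@[simp] theorem auxB_apply (ε : ℝ) (p q : W × ℝ) :
    (auxB ε) p q = ⟪p.1, q.1⟫ + ε * (p.2 * q.2) := rfl

/-- The real inner product as a bilinear form. -/
def auxI : W →ₗ[ℝ] W →ₗ[ℝ] ℝ :=
  LinearMap.mk₂ ℝ (fun p q => ⟪p, q⟫)
    (fun m₁ m₂ n => by simp [inner_add_left])
    (fun a m n => by simp [real_inner_smul_left])
    (fun m n₁ n₂ => by simp [inner_add_right])
    (fun a m n => by simp [real_inner_smul_right])

@[simp] theorem auxI_apply (p q : W) : (auxI) p q = ⟪p, q⟫ := rfl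

/-- The shifted bilinear map `(x,y) ↦ β x y - (c ⟪x,y⟫) • ξ`. -/
def auxS (β : V →ₗ[ℝ] V →ₗ[ℝ] W) (c : ℝ) (ξ : W) : V →ₗ[ℝ] V →ₗ[ℝ] W :=
  LinearMap.mk₂ ℝ (fun x y => β x y - (c * ⟪x, y⟫) • ξ)
    (fun m₁ m₂ n => by
      simp only [map_add, LinearMap.add_apply, inner_add_left, mul_add, add_smul]
      abel)
    (fun a m n => by
      simp only [map_smul, LinearMap.smul_apply, real_inner_smul_left, smul_sub,
        smul_smul]
      ring_nf)
    (fun m n₁ n₂ => by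
      simp only [map_add, inner_add_right, mul_add, add_smul]
      abel)
    (fun a m n => by
      simp only [map_smul, real_inner_smul_right, smul_sub, smul_smul]
      ring_nf)

@[simp] theorem auxS_apply (β : V →ₗ[ℝ] V →ₗ[ℝ] W) (c : ℝ) (ξ : W) (x y : V) :
    auxS β c ξ x y = β x y - (c * ⟪x, y⟫) • ξ := rfl

theorem auxB_one_def (v : W × ℝ) (h : (auxB 1) v v = 0) : v = 0 := by
  simp only [auxB_apply, one_mul] at h
  have h1 : ⟪v.1, v.1⟫ = 0 ∧ v.2 * v.2 = 0 := by
    constructor <;> nlinarith [real_inner_self_nonneg (x := v.1), mul_self_nonneg v.2]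
  have h2 : v.1 = 0 := inner_self_eq_zero.1 h1.1
  have h3 : v.2 = 0 := by nlinarith [h1.2]
  exact Prod.ext h2 h3

theorem auxI_def (v : W) (h : (auxI) v v = 0) : v = 0 := by
  simpa [inner_self_eq_zero] using h

end Constructions

/-- Lemma 2.1 of Vlachos. If a symmetric bilinear map `β : V × V → W`, with
`dim W ≤ dim V − 2`, satisfies `β ⌀ β = μ ⟨·,·⟩ ⌀ ⟨·,·⟩` for some `μ ≠ 0`, then `μ > 0` and
there are a unit vector `ξ ∈ W` and a subspace `V₁ ⊆ V` with
`dim V₁ ≥ dim V − dim W + 1` such that `β(x,y) = √μ ⟨x,y⟩ ξ` for all `x ∈ V₁`, `y ∈ V`. -/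
theorem stmt0 (β : V →ₗ[ℝ] V →ₗ[ℝ] W) (hβ : ∀ x y, β x y = β y x)
    (hdim : finrank ℝ W + 2 ≤ finrank ℝ V) (μ : ℝ) (hμ : μ ≠ 0)
    (hkn : ∀ x₁ x₂ x₃ x₄ : V,
      kn (fun x y => β x y) (fun x y => β x y) x₁ x₂ x₃ x₄ = μ * knG x₁ x₂ x₃ x₄) :
    0 < μ ∧ ∃ ξ : W, ‖ξ‖ = 1 ∧ ∃ V₁ : Submodule ℝ V,
      finrank ℝ V + 1 ≤ finrank ℝ (V₁ : Submodule ℝ V) + finrank ℝ W ∧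
      ∀ x ∈ V₁, ∀ y : V, β x y = (Real.sqrt μ * ⟪x, y⟫) • ξ := by
  classical
  have hGauss : ∀ x y z w : V,
      ⟪β x z, β y w⟫ - ⟪β x w, β y z⟫ = μ * (⟪x, z⟫ * ⟪y, w⟫ - ⟪x, w⟫ * ⟪y, z⟫) := by
    intro x y z w
    have h := hkn x y z w
    simp only [kn, knG] at h
    have c1 : ⟪β y w, β x z⟫ = ⟪β x z, β y w⟫ := real_inner_comm _ _
    have c2 : ⟪β y z, β x w⟫ = ⟪β x w, β y z⟫ := real_inner_comm _ _
    linear_combination h / 2 - c1 / 2 + c2 / 2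
  have hpos : 0 < μ := by
    rcases hμ.lt_or_gt with hneg | hpos
    · exfalso
      set c : ℝ := Real.sqrt (-μ) with hcdef
      have hc2 : c ^ 2 = -μ := Real.sq_sqrt (by linarith)
      have hcpos : 0 < c := Real.sqrt_pos.2 (by linarith)
      set T := auxT β c with hTdef
      have hsymT : ∀ x y, T x y = T y x := by
        intro x y
        simp [hTdef, hβ x y, real_inner_comm x y]
      have hflat : ∀ x y z w, (auxB 1) (T x z) (T y w) = (auxB 1) (T x w) (T y z) := by
        intro x y z w
        simp only [hTdef, auxT_apply, auxB_apply]
        linear_combination hGauss x y z w + (⟪x, z⟫ * ⟪y, w⟫ - ⟪x, w⟫ * ⟪y, z⟫) * hc2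
      obtain ⟨x₀, hmax, hstr⟩ := flat_struct T hsymT (auxB 1) auxB_one_def (auxB 1) hflat
      have hrk : finrank ℝ (LinearMap.range (T x₀)) ≤ finrank ℝ W + 1 := by
        have h1 := Submodule.finrank_le (LinearMap.range (T x₀))
        rwa [Module.finrank_prod, finrank_self] at h1
      have hker : 1 ≤ finrank ℝ (LinearMap.ker (T x₀)) := by
        have h2 := LinearMap.finrank_range_add_finrank_ker (T x₀)
        omega
      have hne : LinearMap.ker (T x₀) ≠ ⊥ := by
        intro h
        rw [h, finrank_bot] at hker
        omega
      obtain ⟨ν, hνmem, hνne⟩ := Submodule.exists_mem_ne_zero_of_ne_bot hne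
      have hν0 : T x₀ ν = 0 := LinearMap.mem_ker.1 hνmem
      obtain ⟨hmem, hperp⟩ := hstr ν hν0 ν
      obtain ⟨u₀, hu₀⟩ := hmem
      have hq : (auxB 1) (T ν ν) (T ν ν) = 0 := by
        have h6 := hperp u₀
        rwa [hu₀] at h6
      have hz : T ν ν = 0 := auxB_one_def _ hq
      have h2 : c * ⟪ν, ν⟫ = 0 := congrArg Prod.snd hz
      have h3 : ⟪ν, ν⟫ = (0 : ℝ) := by
        rcases mul_eq_zero.1 h2 with h | h
        · exact absurd h hcpos.ne'
        · exact h
      exact hνne (inner_self_eq_zero.1 h3)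
    · exact hpos
  set c : ℝ := Real.sqrt μ with hcdef
  have hc2 : c ^ 2 = μ := Real.sq_sqrt hpos.le
  have hcpos : 0 < c := Real.sqrt_pos.2 hpos
  set T := auxT β c with hTdef
  have hsymT : ∀ x y, T x y = T y x := by
    intro x y
    simp [hTdef, hβ x y, real_inner_comm x y]
  have hflat : ∀ x y z w, (auxB (-1)) (T x z) (T y w) = (auxB (-1)) (T x w) (T y z) := by
    intro x y z w
    simp only [hTdef, auxT_apply, auxB_apply]
    linear_combination hGauss x y z w - (⟪x, z⟫ * ⟪y, w⟫ - ⟪x, w⟫ * ⟪y, z⟫) * hc2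
  obtain ⟨x₀, hmax, hstr⟩ := flat_struct T hsymT (auxB 1) auxB_one_def (auxB (-1)) hflat
  have hrk : finrank ℝ (LinearMap.range (T x₀)) ≤ finrank ℝ W + 1 := by
    have h1 := Submodule.finrank_le (LinearMap.range (T x₀))
    rwa [Module.finrank_prod, finrank_self] at h1
  have hker : 1 ≤ finrank ℝ (LinearMap.ker (T x₀)) := by
    have h2 := LinearMap.finrank_range_add_finrank_ker (T x₀)
    omega
  have hne : LinearMap.ker (T x₀) ≠ ⊥ := by
    intro h
    rw [h, finrank_bot] at hker
    omega
  obtain ⟨ν₀, hν₀mem, hν₀ne⟩ := Submodule.exists_mem_ne_zero_of_ne_bot hne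
  obtain ⟨ν, hνmem, hνnorm⟩ : ∃ ν : V, ν ∈ LinearMap.ker (T x₀) ∧ ‖ν‖ = 1 :=
    ⟨‖ν₀‖⁻¹ • ν₀, Submodule.smul_mem _ _ hν₀mem, norm_smul_inv_norm hν₀ne⟩
  have hν0 : T x₀ ν = 0 := LinearMap.mem_ker.1 hνmem
  have hip : ⟪ν, ν⟫ = (1 : ℝ) := by
    rw [real_inner_self_eq_norm_sq, hνnorm]
    norm_num
  obtain ⟨hmem₀, hperp₀⟩ := hstr ν hν0 ν
  obtain ⟨u₀, hu₀⟩ := hmem₀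
  have hηs : (auxB (-1)) (T ν ν) (T ν ν) = 0 := by
    have h6 := hperp₀ u₀
    rwa [hu₀] at h6
  have hξ0ξ0 : ⟪β ν ν, β ν ν⟫ = μ := by
    simp only [hTdef, auxT_apply, auxB_apply, hip, mul_one] at hηs
    linear_combination hηs + hc2
  obtain ⟨ξ, hξdef⟩ : ∃ ξ : W, ξ = c⁻¹ • β ν ν := ⟨_, rfl⟩
  have hξ0eq : β ν ν = c • ξ := by
    rw [hξdef, smul_smul, mul_inv_cancel₀ hcpos.ne', one_smul]
  have hξnorm : ‖ξ‖ = 1 := by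
    have h1 : ‖β ν ν‖ = c := by
      have h2 : ‖β ν ν‖ ^ 2 = c ^ 2 := by
        rw [hc2, ← hξ0ξ0, real_inner_self_eq_norm_sq]
      nlinarith [norm_nonneg (β ν ν), hcpos]
    rw [hξdef, norm_smul, h1, Real.norm_eq_abs, abs_of_pos (inv_pos.2 hcpos)]
    exact inv_mul_cancel₀ hcpos.ne'
  have hkerstruct : ∀ ν' : V, T x₀ ν' = 0 → ∀ z : V, β ν' z = (c * ⟪ν', z⟫) • ξ := by
    intro ν' h0 z
    obtain ⟨hm, hp⟩ := hstr ν' h0 z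
    obtain ⟨u₁, hu₁⟩ := hm
    have h_ss : (auxB (-1)) (T ν' z) (T ν' z) = 0 := by
      have h6 := hp u₁
      rwa [hu₁] at h6
    have h_sη : (auxB (-1)) (T ν' z) (T ν ν) = 0 := by
      have h6 := hp u₀
      rwa [hu₀] at h6
    simp only [hTdef, auxT_apply, auxB_apply, hip, mul_one] at h_ss h_sη
    have hcm : ⟪β ν ν, β ν' z⟫ = ⟪β ν' z, β ν ν⟫ := real_inner_comm _ _
    have hstep : β ν' z = ⟪ν', z⟫ • β ν ν := by
      have hgoal : ⟪β ν' z - ⟪ν', z⟫ • β ν ν, β ν' z - ⟪ν', z⟫ • β ν ν⟫ = (0 : ℝ) := by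
        simp only [inner_sub_left, inner_sub_right, real_inner_smul_left,
          real_inner_smul_right]
        linear_combination h_ss - 2 * ⟪ν', z⟫ * h_sη - ⟪ν', z⟫ * hcm +
          ⟪ν', z⟫ ^ 2 * hξ0ξ0 - ⟪ν', z⟫ ^ 2 * hc2
      exact sub_eq_zero.1 (inner_self_eq_zero.1 hgoal)
    rw [hstep, hξ0eq, smul_smul, mul_comm]
  have hβν : ∀ w : V, β ν w = (c * ⟪ν, w⟫) • ξ := fun w => hkerstruct ν hν0 w
  have hAξ : ∀ v w : V, ⟪β v w, β ν ν⟫ = μ * ⟪v, w⟫ := by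
    intro v w
    have hsub : ⟪v - ⟪v, ν⟫ • ν, ν⟫ = (0 : ℝ) := by
      simp [inner_sub_left, real_inner_smul_left, hip, hνnorm]
    have hνv' : ⟪ν, v - ⟪v, ν⟫ • ν⟫ = (0 : ℝ) := by
      rw [real_inner_comm]
      exact hsub
    have hβv'ν : β (v - ⟪v, ν⟫ • ν) ν = 0 := by
      rw [hβ (v - ⟪v, ν⟫ • ν) ν, hkerstruct ν hν0 (v - ⟪v, ν⟫ • ν), hνv', mul_zero,
        zero_smul]
    have hG := hGauss (v - ⟪v, ν⟫ • ν) ν w ν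
    rw [hβv'ν] at hG
    simp only [inner_zero_left, sub_zero, hip, mul_one, hsub, zero_mul] at hG
    have h8 : ⟪ξ, β ν ν⟫ = c⁻¹ * μ := by
      rw [hξdef, real_inner_smul_left, hξ0ξ0]
    have h2 : ⟪β ν w, β ν ν⟫ = μ * ⟪ν, w⟫ := by
      rw [hβν w, real_inner_smul_left, h8]
      field_simp
    have hdec : β v w = β (v - ⟪v, ν⟫ • ν) w + ⟪v, ν⟫ • β ν w := by
      simp only [map_sub, map_smul, LinearMap.sub_apply, LinearMap.smul_apply]
      abel
    rw [hdec, inner_add_left, real_inner_smul_left, h2, hG]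
    simp only [inner_sub_left, real_inner_smul_left]
    ring
  have hβξ : ∀ v w : V, ⟪β v w, ξ⟫ = c * ⟪v, w⟫ := by
    intro v w
    rw [hξdef, real_inner_smul_right, hAξ v w, ← hc2]
    field_simp
  have hξβ : ∀ v w : V, ⟪ξ, β v w⟫ = c * ⟪v, w⟫ := by
    intro v w
    rw [real_inner_comm]
    exact hβξ v w
  have hξξ : ⟪ξ, ξ⟫ = (1 : ℝ) := by
    rw [real_inner_self_eq_norm_sq, hξnorm]
    norm_num
  set T' := auxS β c ξ with hT'def
  have hsymT' : ∀ x y, T' x y = T' y x := by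
    intro x y
    simp [hT'def, hβ x y, real_inner_comm x y]
  have hT'ip : ∀ x z y w : V,
      ⟪T' x z, T' y w⟫ = ⟪β x z, β y w⟫ - μ * (⟪x, z⟫ * ⟪y, w⟫) := by
    intro x z y w
    simp only [hT'def, auxS_apply, inner_sub_left, inner_sub_right, real_inner_smul_left,
      real_inner_smul_right, hβξ, hξβ, hξξ]
    linear_combination (- ⟪x, z⟫ * ⟪y, w⟫) * hc2
  have hflat' : ∀ x y z w, (auxI) (T' x z) (T' y w) = (auxI) (T' x w) (T' y z) := by
    intro x y z w
    simp only [auxI_apply, hT'ip]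
    linear_combination hGauss x y z w
  obtain ⟨x₁, hmax', hstr'⟩ := flat_struct T' hsymT' auxI auxI_def auxI hflat'
  refine ⟨hpos, ξ, hξnorm, LinearMap.ker (T' x₁), ?_, ?_⟩
  · have hle : LinearMap.range (T' x₁) ≤ (ℝ ∙ ξ)ᗮ := by
      rintro _ ⟨y, rfl⟩
      rw [Submodule.mem_orthogonal]
      intro u hu
      obtain ⟨a, rfl⟩ := Submodule.mem_span_singleton.1 hu
      rw [real_inner_smul_left]
      have h5 : ⟪ξ, T' x₁ y⟫ = 0 := by
        simp only [hT'def, auxS_apply, inner_sub_right, real_inner_smul_right, hξβ, hξξ]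
        ring
      rw [h5, mul_zero]
    have h1 : finrank ℝ (LinearMap.range (T' x₁)) ≤ finrank ℝ ((ℝ ∙ ξ)ᗮ) :=
      Submodule.finrank_mono hle
    have h2 : finrank ℝ (ℝ ∙ ξ : Submodule ℝ W) + finrank ℝ ((ℝ ∙ ξ)ᗮ) = finrank ℝ W :=
      Submodule.finrank_add_finrank_orthogonal _
    have hξne : ξ ≠ 0 := by
      intro h
      rw [h, norm_zero] at hξnorm
      norm_num at hξnorm
    have h3 : finrank ℝ (ℝ ∙ ξ : Submodule ℝ W) = 1 := finrank_span_singleton hξne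
    have h4 := LinearMap.finrank_range_add_finrank_ker (T' x₁)
    omega
  · intro x hx y
    have hx0 : T' x₁ x = 0 := LinearMap.mem_ker.1 hx
    obtain ⟨hm, hp⟩ := hstr' x hx0 y
    obtain ⟨u₂, hu₂⟩ := hm
    have hq : (auxI) (T' x y) (T' x y) = 0 := by
      have h6 := hp u₂
      rwa [hu₂] at h6
    have h0 : T' x y = 0 := auxI_def _ hq
    have h1 : β x y - (c * ⟪x, y⟫) • ξ = 0 := by
      rw [hT'def] at h0
      simpa using h0
    exact sub_eq_zero.1 h1
end
end

section
/- Let V be a finite-dimensional real vector space, U a finite-dimensional real vector space equipped with a nondegenerate symmetric bilinear form ⟨·,·⟩ of Lorentzian signature (i.e. negative index 1), and β : V × V → U a symmetric bilinear map that is flat with respect to ⟨·,·⟩. If dim V > dim U and β(x,x) ≠ 0 for every nonzero x ∈ V, then there exist a nonzero isotropic vector e ∈ U (i.e. ⟨e,e⟩ = 0) and a symmetric bilinear form φ : V × V → ℝ such that the nullity space of β − φ·e has dimension at least dim V − dim U + 2. -/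
open Module

noncomputable section


lemma lorentz_aux {U : Type*} [AddCommGroup U] [Module ℝ U]
    (B : U →ₗ[ℝ] U →ₗ[ℝ] ℝ) (hBsymm : ∀ u w, B u w = B w u)
    (hBnondeg : ∀ u : U, (∀ w : U, B u w = 0) → u = 0)
    (hBlor : ∀ U₁ : Submodule ℝ U, (∀ u ∈ U₁, u ≠ 0 → B u u < 0) → finrank ℝ U₁ ≤ 1)
    {w₁ w₂ : U} (h11 : B w₁ w₁ = 0) (h22 : B w₂ w₂ = 0) (h12 : B w₁ w₂ = 0)
    (hind : LinearIndependent ℝ ![w₁, w₂]) : False := by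
  have hpair := LinearIndependent.pair_iff.mp hind
  have negvec : ∀ w v : U, B w w = 0 → B w v = 1 →
      ∃ t : ℝ, 0 < t ∧ B (w - t • v) (w - t • v) < 0 := by
    intro w v hw hwv
    set c := B v v with hc
    have h1 : (0:ℝ) < 1 + |c| := by positivity
    refine ⟨(1 + |c|)⁻¹, by positivity, ?_⟩
    have hvw : B v w = 1 := by rw [hBsymm]; exact hwv
    have hexp : B (w - (1 + |c|)⁻¹ • v) (w - (1 + |c|)⁻¹ • v)
        = -2 * (1 + |c|)⁻¹ + (1 + |c|)⁻¹ ^ 2 * c := by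
      simp only [map_sub, map_smul, LinearMap.sub_apply, LinearMap.smul_apply,
        smul_eq_mul, hw, hwv, hvw, ← hc]
      ring
    rw [hexp]
    have ht : (0:ℝ) < (1 + |c|)⁻¹ := by positivity
    have h2 : (1 + |c|)⁻¹ * (1 + |c|) = 1 := inv_mul_cancel₀ (ne_of_gt h1)
    nlinarith [le_abs_self c, abs_nonneg c, sq_nonneg ((1 + |c|)⁻¹)]
  have hw1ne : w₁ ≠ 0 := hind.ne_zero 0
  -- v₁ with B w₁ v₁ = 1
  obtain ⟨v, hv⟩ : ∃ v, B w₁ v ≠ 0 := by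
    by_contra h
    push_neg at h
    exact hw1ne (hBnondeg _ h)
  set v₁ := (B w₁ v)⁻¹ • v with hv₁def
  have hv₁ : B w₁ v₁ = 1 := by
    simp only [hv₁def, map_smul, smul_eq_mul]
    field_simp
  -- adjust w₂
  set w₂' := w₂ - (B w₂ v₁) • w₁ with hw₂'def
  have h21 : B w₂ w₁ = 0 := by rw [hBsymm]; exact h12
  have hw₂'w₂' : B w₂' w₂' = 0 := by
    simp only [hw₂'def, map_sub, map_smul, LinearMap.sub_apply, LinearMap.smul_apply,
      smul_eq_mul, h22, h21, h12, h11]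
    ring
  have hw₂'w₁ : B w₂' w₁ = 0 := by
    simp only [hw₂'def, map_sub, map_smul, LinearMap.sub_apply, LinearMap.smul_apply,
      smul_eq_mul, h21, h11]
    ring
  have hw₂'v₁ : B w₂' v₁ = 0 := by
    simp only [hw₂'def, map_sub, map_smul, LinearMap.sub_apply, LinearMap.smul_apply,
      smul_eq_mul, hv₁]
    ring
  have hw₂'ne : w₂' ≠ 0 := by
    intro h
    have h0 : (B w₂ v₁) • w₁ + (-1 : ℝ) • w₂ = 0 := by
      rw [hw₂'def] at h
      linear_combination (norm := module) -h
    have := (hpair _ _ h0).2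
    norm_num at this
  -- v₂' with B w₂' v₂' = 1, orthogonal to w₁ and v₁
  obtain ⟨u, hu⟩ : ∃ u, B w₂' u ≠ 0 := by
    by_contra h
    push_neg at h
    exact hw₂'ne (hBnondeg _ h)
  set v₂ := (B w₂' u)⁻¹ • u with hv₂def
  have hv₂ : B w₂' v₂ = 1 := by
    simp only [hv₂def, map_smul, smul_eq_mul]
    field_simp
  set b := B v₂ w₁ with hbdef
  set a := B v₂ v₁ - b * B v₁ v₁ with hadef
  set v₂' := v₂ - a • w₁ - b • v₁ with hv₂'def
  have hv₂'w₁ : B v₂' w₁ = 0 := by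
    have h1 : B v₁ w₁ = 1 := by rw [hBsymm]; exact hv₁
    simp only [hv₂'def, map_sub, map_smul, LinearMap.sub_apply, LinearMap.smul_apply,
      smul_eq_mul, h11, h1, ← hbdef]
    ring
  have hv₂'v₁ : B v₂' v₁ = 0 := by
    simp only [hv₂'def, hadef, map_sub, map_smul, LinearMap.sub_apply, LinearMap.smul_apply,
      smul_eq_mul, hv₁]
    ring
  have hv₂'w₂' : B w₂' v₂' = 1 := by
    have : B w₂' v₂' = B w₂' v₂ - a * B w₂' w₁ - b * B w₂' v₁ := by
      simp only [hv₂'def, map_sub, map_smul, smul_eq_mul]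
    rw [this, hv₂, hw₂'w₁, hw₂'v₁]; ring
  -- negative vectors
  obtain ⟨t₁, ht₁, hn₁⟩ := negvec w₁ v₁ h11 hv₁
  obtain ⟨t₂, ht₂, hn₂⟩ := negvec w₂' v₂' hw₂'w₂' hv₂'w₂'
  set n₁ := w₁ - t₁ • v₁ with hn₁def
  set n₂ := w₂' - t₂ • v₂' with hn₂def
  have hcross : B n₁ n₂ = 0 := by
    have e1 : B w₁ w₂' = 0 := by rw [hBsymm]; exact hw₂'w₁
    have e2 : B v₁ w₂' = 0 := by rw [hBsymm]; exact hw₂'v₁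
    have e3 : B w₁ v₂' = 0 := by rw [hBsymm]; exact hv₂'w₁
    have e4 : B v₁ v₂' = 0 := by rw [hBsymm]; exact hv₂'v₁
    simp only [hn₁def, hn₂def, map_sub, map_smul, LinearMap.sub_apply, LinearMap.smul_apply,
      smul_eq_mul, e1, e2, e3, e4]
    ring
  have hcross' : B n₂ n₁ = 0 := by rw [hBsymm]; exact hcross
  -- the span of n₁ n₂ is negative definite of dim 2
  have hn₁ne : n₁ ≠ 0 := by intro h; rw [h] at hn₁; simp at hn₁
  have hn₂ne : n₂ ≠ 0 := by intro h; rw [h] at hn₂; simp at hn₂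
  have hindn : LinearIndependent ℝ ![n₁, n₂] := by
    rw [LinearIndependent.pair_iff]
    intro s t hst
    have h1 : B (s • n₁ + t • n₂) n₁ = 0 := by rw [hst]; simp
    have h2 : B (s • n₁ + t • n₂) n₂ = 0 := by rw [hst]; simp
    simp only [map_add, map_smul, LinearMap.add_apply, LinearMap.smul_apply, smul_eq_mul,
      hcross, hcross', mul_zero, add_zero, zero_add] at h1 h2
    have hs : s = 0 := by
      rcases mul_eq_zero.mp h1 with h | h
      · exact h
      · exact absurd h (ne_of_lt hn₁)
    have htz : t = 0 := by
      rcases mul_eq_zero.mp h2 with h | h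
      · exact h
      · exact absurd h (ne_of_lt hn₂)
    exact ⟨hs, htz⟩
  clear_value v₁ v₂ w₂' v₂' n₁ n₂
  set p : Submodule ℝ U := Submodule.span ℝ {n₁, n₂} with hpdef
  have hneg : ∀ u ∈ p, u ≠ 0 → B u u < 0 := by
    intro x hx hxne
    obtain ⟨s, t, rfl⟩ := Submodule.mem_span_pair.mp hx
    have hst : s ≠ 0 ∨ t ≠ 0 := by
      by_contra h
      push_neg at h
      apply hxne
      rw [h.1, h.2]; simp
    have hexp : B (s • n₁ + t • n₂) (s • n₁ + t • n₂)
        = s^2 * B n₁ n₁ + t^2 * B n₂ n₂ := by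
      simp only [map_add, map_smul, LinearMap.add_apply, LinearMap.smul_apply, smul_eq_mul,
        hcross, hcross']
      ring
    rw [hexp]
    rcases hst with hs | ht
    · have h1 : 0 < s ^ 2 := by positivity
      have h2 : s ^ 2 * B n₁ n₁ < 0 := mul_neg_of_pos_of_neg h1 hn₁
      have h3 : t ^ 2 * B n₂ n₂ ≤ 0 :=
        mul_nonpos_of_nonneg_of_nonpos (sq_nonneg t) (le_of_lt hn₂)
      linarith
    · have h1 : 0 < t ^ 2 := by positivity
      have h2 : t ^ 2 * B n₂ n₂ < 0 := mul_neg_of_pos_of_neg h1 hn₂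
      have h3 : s ^ 2 * B n₁ n₁ ≤ 0 :=
        mul_nonpos_of_nonneg_of_nonpos (sq_nonneg s) (le_of_lt hn₁)
      linarith
  have hdim : finrank ℝ p ≤ 1 := hBlor p hneg
  have hdim2 : finrank ℝ p = 2 := by
    have hr : ({n₁, n₂} : Set U) = Set.range ![n₁, n₂] := by
      simp [Set.range_comp, Set.pair_comm]
    rw [hpdef, hr, finrank_span_eq_card hindn]
    simp
  omega


lemma lemmaA {V U : Type*} [AddCommGroup V] [Module ℝ V] [FiniteDimensional ℝ V]
    [AddCommGroup U] [Module ℝ U] [FiniteDimensional ℝ U]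
    (β : V →ₗ[ℝ] V →ₗ[ℝ] U) (x₀ : V)
    (hmax : ∀ x : V, finrank ℝ (LinearMap.range (β x)) ≤ finrank ℝ (LinearMap.range (β x₀)))
    {y z : V} (hz : β x₀ z = 0) : β y z ∈ LinearMap.range (β x₀) := by
  classical
  by_contra hmem
  set Im := LinearMap.range (β x₀) with hImdef
  set k := finrank ℝ Im with hkdef
  set w : Basis (Fin k) ℝ Im := finBasis ℝ Im with hwdef
  -- preimages of the basis vectors
  have hpre : ∀ j : Fin k, ∃ v : V, β x₀ v = (w j : U) := fun j => (w j).2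
  choose v hv using hpre
  -- the family c
  set c : Fin (k + 1) → U := Fin.snoc (fun j => (w j : U)) (β y z) with hcdef
  have hspanw : Submodule.span ℝ (Set.range fun j => ((w j : U))) = Im := by
    have : (Set.range fun j => ((w j : U))) = Im.subtype '' (Set.range w) := by
      rw [← Set.range_comp]; rfl
    rw [this, ← Submodule.map_span, w.span_eq, Submodule.map_top, Submodule.range_subtype]
  have hindw : LinearIndependent ℝ (fun j => ((w j : U))) :=
    w.linearIndependent.map' Im.subtype (Submodule.ker_subtype Im)
  have hc : LinearIndependent ℝ c := by
    rw [hcdef, linearIndependent_fin_snoc]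
    exact ⟨hindw, by rw [hspanw]; exact hmem⟩
  -- coordinate functionals
  set W' := Submodule.span ℝ (Set.range c) with hW'def
  set b' : Basis (Fin (k + 1)) ℝ W' := Basis.span hc with hb'def
  obtain ⟨q, hq⟩ := Submodule.exists_isCompl W'
  set π := W'.projectionOnto q hq with hπdef
  set F : U →ₗ[ℝ] (Fin (k + 1) → ℝ) :=
    LinearMap.pi (fun i => (b'.coord i).comp π) with hFdef
  have hFc : ∀ i j, F (c j) i = if i = j then 1 else 0 := by
    intro i j
    have hmem' : c j ∈ W' := Submodule.subset_span (Set.mem_range_self j)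
    have hπc : π (c j) = b' j := by
      have h1 : π (c j) = ⟨c j, hmem'⟩ := by
        have := Submodule.linearProjOfIsCompl_apply_left hq (⟨c j, hmem'⟩ : W')
        simpa [hπdef] using this
      rw [h1]
      ext
      exact congrArg Subtype.val (Basis.span_apply hc j).symm
    simp only [hFdef, LinearMap.pi_apply, LinearMap.comp_apply, hπc]
    rw [Basis.coord_apply, b'.repr_self]
    rw [Finsupp.single_apply]
    by_cases h : i = j <;> simp [h, eq_comm]
  -- the vector families
  set u : ℝ → Fin (k + 1) → U :=
    fun t => Fin.snoc (fun j => β (x₀ + t • y) (v j)) (β y z) with hudef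
  set M : ℝ → Matrix (Fin (k + 1)) (Fin (k + 1)) ℝ :=
    fun t => Matrix.of fun i j => F (u t j) i with hMdef
  -- M 0 is the identity
  have hu0 : ∀ j, u 0 j = c j := by
    intro j
    refine Fin.lastCases ?_ ?_ j
    · simp [hudef, hcdef]
    · intro j'
      simp [hudef, hcdef, Fin.snoc_castSucc, hv]
  have hM0 : M 0 = 1 := by
    ext i j
    rw [hMdef]
    simp only [Matrix.of_apply, hu0, hFc]
    rw [Matrix.one_apply]
  -- det vanishes for t ≠ 0
  have hdetne : ∀ t : ℝ, t ≠ 0 → (M t).det = 0 := by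
    intro t ht
    have hrange : ∀ j, u t j ∈ LinearMap.range (β (x₀ + t • y)) := by
      intro j
      refine Fin.lastCases ?_ ?_ j
      · have hexp : β (x₀ + t • y) z = t • β y z := by
          simp [map_add, map_smul, hz]
        refine ⟨t⁻¹ • z, ?_⟩
        rw [map_smul, hexp, smul_smul, inv_mul_cancel₀ ht, one_smul]
        simp [hudef]
      · intro j'
        exact ⟨v j', by simp [hudef]⟩
    set S := Submodule.map F (LinearMap.range (β (x₀ + t • y))) with hSdef
    have hS : finrank ℝ S ≤ k := le_trans (Submodule.finrank_map_le F _) (hmax _)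
    have hcols : ∀ j, F (u t j) ∈ S := fun j => ⟨u t j, hrange j, rfl⟩
    have hnotind : ¬ LinearIndependent ℝ (fun j => F (u t j)) := by
      intro hind
      have h1 := finrank_span_eq_card hind
      have h2 : Submodule.span ℝ (Set.range fun j => F (u t j)) ≤ S := by
        rw [Submodule.span_le]
        rintro _ ⟨j, rfl⟩
        exact hcols j
      have h3 := Submodule.finrank_mono h2
      rw [h1] at h3
      simp only [Fintype.card_fin] at h3
      omega
    obtain ⟨g, hsum, j₀, hj₀⟩ := Fintype.not_linearIndependent_iff.mp hnotind
    rw [← Matrix.exists_mulVec_eq_zero_iff]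
    refine ⟨g, fun h => hj₀ (by rw [h]; rfl), ?_⟩
    funext i
    have := congrFun hsum i
    simp only [Finset.sum_apply, Pi.smul_apply, smul_eq_mul, Pi.zero_apply] at this
    simp only [Matrix.mulVec, dotProduct, hMdef, Matrix.of_apply, Pi.zero_apply]
    rw [← this]
    exact Finset.sum_congr rfl fun j _ => mul_comm _ _
  -- continuity of det
  have hcont : Continuous fun t => (M t).det := by
    refine Continuous.matrix_det (continuous_matrix fun i j => ?_)
    refine Fin.lastCases ?_ ?_ j
    · have : (fun t : ℝ => M t i (Fin.last k)) = fun _ => F (β y z) i := by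
        funext t
        simp [hMdef, hudef]
      rw [this]
      exact continuous_const
    · intro j'
      have : (fun t : ℝ => M t i (Fin.castSucc j')) =
          fun t => F (β x₀ (v j')) i + t * F (β y (v j')) i := by
        funext t
        simp only [hMdef, Matrix.of_apply, hudef, Fin.snoc_castSucc]
        rw [map_add, map_smul]
        simp [map_add]
      rw [this]
      exact continuous_const.add (continuous_id.mul continuous_const)
  -- conclude
  have hzero : ∀ t : ℝ, (M t).det = 0 := by
    have hcl : IsClosed {t : ℝ | (M t).det = 0} := isClosed_eq hcont continuous_const
    have hdense : Dense {t : ℝ | (M t).det = 0} :=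
      Dense.mono (fun t (ht : t ∈ ({(0:ℝ)}ᶜ : Set ℝ)) => hdetne t ht) (dense_compl_singleton 0)
    have huniv : {t : ℝ | (M t).det = 0} = Set.univ := by
      rw [← hcl.closure_eq]
      exact hdense.closure_eq
    intro t
    have : t ∈ ({t : ℝ | (M t).det = 0}) := huniv ▸ Set.mem_univ t
    exact this
  have h1 := hzero 0
  rw [hM0, Matrix.det_one] at h1
  exact one_ne_zero h1

/-- Moore. Let `V` be a finite-dimensional real vector space, `U` a
finite-dimensional real vector space with a nondegenerate symmetric bilinear form `B` of
Lorentzian signature (negative index 1), and `β : V × V → U` a symmetric bilinear map that is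
flat with respect to `B`. If `dim V > dim U` and `β(x,x) ≠ 0` for every nonzero `x`, then
there are a nonzero isotropic vector `e ∈ U` and a symmetric bilinear form `φ : V × V → ℝ`
such that the nullity space `N(β − φ·e) = {x : ∀ y, β(x,y) − φ(x,y)e = 0}` has dimension at
least `dim V − dim U + 2`. -/
theorem stmt2 {V U : Type*} [AddCommGroup V] [Module ℝ V] [FiniteDimensional ℝ V]
    [AddCommGroup U] [Module ℝ U] [FiniteDimensional ℝ U]
    (B : U →ₗ[ℝ] U →ₗ[ℝ] ℝ) (hBsymm : ∀ u w, B u w = B w u)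
    (hBnondeg : ∀ u : U, (∀ w : U, B u w = 0) → u = 0)
    -- Lorentzian signature: there is a vector on which `B` is negative, and every subspace
    -- on which `B` is negative definite has dimension at most 1.
    (hBneg : ∃ u : U, B u u < 0)
    (hBlor : ∀ U₁ : Submodule ℝ U, (∀ u ∈ U₁, u ≠ 0 → B u u < 0) → finrank ℝ U₁ ≤ 1)
    (β : V →ₗ[ℝ] V →ₗ[ℝ] U) (hβsymm : ∀ x y, β x y = β y x)
    (hflat : ∀ x₁ x₂ x₃ x₄ : V, B (β x₁ x₃) (β x₂ x₄) - B (β x₁ x₄) (β x₂ x₃) = 0)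
    (hdim : finrank ℝ U < finrank ℝ V)
    (hdef : ∀ x : V, x ≠ 0 → β x x ≠ 0) :
    ∃ e : U, e ≠ 0 ∧ B e e = 0 ∧
      ∃ φ : V →ₗ[ℝ] V →ₗ[ℝ] ℝ, (∀ x y, φ x y = φ y x) ∧
        finrank ℝ V + 2 ≤
          finrank ℝ
            ↥(⨅ y : V, LinearMap.ker (β.flip y - LinearMap.smulRight (φ.flip y) e)) +
            finrank ℝ U := by
  classical
  -- choose a regular element x₀
  obtain ⟨x₀, hmax⟩ : ∃ x₀ : V, ∀ x : V,
      finrank ℝ (LinearMap.range (β x)) ≤ finrank ℝ (LinearMap.range (β x₀)) := by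
    set r : V → ℕ := fun x => finrank ℝ (LinearMap.range (β x)) with hrdef
    have hbdd : BddAbove (Set.range r) :=
      ⟨finrank ℝ U, by rintro _ ⟨x, rfl⟩; exact Submodule.finrank_le _⟩
    have hne : (Set.range r).Nonempty := ⟨r 0, Set.mem_range_self 0⟩
    obtain ⟨x₀, hx₀⟩ := Nat.sSup_mem hne hbdd
    refine ⟨x₀, fun x => ?_⟩
    show r x ≤ r x₀
    rw [hx₀]
    exact le_csSup hbdd (Set.mem_range_self x)
  set Im := LinearMap.range (β x₀) with hImdef
  set Nk := LinearMap.ker (β x₀) with hNkdef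
  set k := finrank ℝ Im with hkdef
  have hkm : k ≤ finrank ℝ U := Submodule.finrank_le Im
  have hrn : k + finrank ℝ Nk = finrank ℝ V := LinearMap.finrank_range_add_finrank_ker (β x₀)
  -- a nonzero element of the kernel
  have hNne : Nk ≠ ⊥ := by
    intro h
    rw [h, finrank_bot] at hrn
    omega
  obtain ⟨z₀, hz₀mem, hz₀ne⟩ := Submodule.exists_mem_ne_zero_of_ne_bot hNne
  have hz₀ : β x₀ z₀ = 0 := LinearMap.mem_ker.mp hz₀mem
  set e := β z₀ z₀ with hedef
  have he0 : e ≠ 0 := hdef z₀ hz₀ne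
  have flat' : ∀ x₁ x₂ x₃ x₄ : V, B (β x₁ x₃) (β x₂ x₄) = B (β x₁ x₄) (β x₂ x₃) := by
    intro a b c d
    have := hflat a b c d
    linarith
  have step1 : ∀ y z : V, β x₀ z = 0 → ∀ x' : V, B (β y z) (β x₀ x') = 0 := by
    intro y z hzz x'
    have h := flat' y x₀ z x'
    rw [hzz] at h
    simpa using h
  have step2 : ∀ y z : V, β x₀ z = 0 → β y z ∈ Im := fun y z h => lemmaA β x₀ hmax h
  have he_mem : e ∈ Im := step2 z₀ z₀ hz₀
  have he_perp : ∀ x', B e (β x₀ x') = 0 := step1 z₀ z₀ hz₀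
  have hee : B e e = 0 := by
    obtain ⟨x', hx'⟩ := he_mem
    have h := he_perp x'
    rwa [hx'] at h
  have step4 : ∀ a b : V, B (β a b) e = 0 := by
    intro a b
    have h := flat' a z₀ b z₀
    obtain ⟨x', hx'⟩ := step2 b z₀ hz₀
    rw [hedef, h, show β z₀ b = β b z₀ from hβsymm z₀ b, ← hx']
    exact step1 a z₀ hz₀ x'
  have step4' : ∀ a b : V, B e (β a b) = 0 := fun a b => by rw [hBsymm]; exact step4 a b
  -- choose a functional with f e = 1
  obtain ⟨g, hg⟩ : ∃ g : Module.Dual ℝ U, g e ≠ 0 := by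
    by_contra h
    push_neg at h
    exact he0 ((forall_dual_apply_eq_zero_iff ℝ e).mp h)
  set f : U →ₗ[ℝ] ℝ := (g e)⁻¹ • g with hfdef
  have hf : f e = 1 := by
    simp only [hfdef, LinearMap.smul_apply, smul_eq_mul]
    field_simp
  set φ := β.compr₂ f with hφdef
  have hφsymm : ∀ a b, φ a b = φ b a := by
    intro a b
    simp only [hφdef, LinearMap.compr₂_apply, hβsymm a b]
  refine ⟨e, he0, hee, φ, hφsymm, ?_⟩
  set K := ⨅ y : V, LinearMap.ker (β.flip y - LinearMap.smulRight (φ.flip y) e) with hKdef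
  have hKmem : ∀ z : V, (∀ y, β z y ∈ Submodule.span ℝ {e}) → z ∈ K := by
    intro z hzz
    rw [hKdef, Submodule.mem_iInf]
    intro y
    rw [LinearMap.mem_ker, LinearMap.sub_apply, LinearMap.smulRight_apply]
    obtain ⟨a, ha⟩ := Submodule.mem_span_singleton.mp (hzz y)
    have h1 : β.flip y z = a • e := by rw [LinearMap.flip_apply, ← ha]
    have h2 : φ.flip y z = a := by
      rw [LinearMap.flip_apply, hφdef, LinearMap.compr₂_apply, ← ha, map_smul, hf,
        smul_eq_mul, mul_one]
    rw [h1, h2, sub_self]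
  by_cases hcase : k + 2 ≤ finrank ℝ U
  · -- use the kernel Nk
    have hsub : Nk ≤ K := by
      intro z hzmem
      have hzz : β x₀ z = 0 := LinearMap.mem_ker.mp hzmem
      apply hKmem
      intro y
      rw [hβsymm]
      by_contra hw
      set wv := β y z with hwvdef
      have hwIm : wv ∈ Im := step2 y z hzz
      have hwperp : ∀ x', B wv (β x₀ x') = 0 := step1 y z hzz
      obtain ⟨x', hx'⟩ := hwIm
      have hww : B wv wv = 0 := by have h := hwperp x'; rwa [hx'] at h
      have hew : B e wv = 0 := by have h := he_perp x'; rwa [hx'] at h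
      have hind : LinearIndependent ℝ ![e, wv] := by
        rw [LinearIndependent.pair_iff]
        intro s t hst
        by_cases htz : t = 0
        · subst htz
          rw [zero_smul, add_zero] at hst
          exact ⟨(smul_eq_zero.mp hst).resolve_right he0, rfl⟩
        · exfalso
          apply hw
          rw [Submodule.mem_span_singleton]
          refine ⟨t⁻¹ * (-s), ?_⟩
          have : t • wv = (-s) • e := by
            rw [neg_smul]
            rw [add_comm] at hst
            exact eq_neg_of_add_eq_zero_left hst
          rw [mul_smul, ← this, smul_smul, inv_mul_cancel₀ htz, one_smul]
      exact lorentz_aux B hBsymm hBnondeg hBlor hee hww hew hind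
    have hfin : finrank ℝ Nk ≤ finrank ℝ K := Submodule.finrank_mono hsub
    omega
  · push_neg at hcase
    -- the orthogonal complement of Im is spanned by e
    have hrefl : LinearMap.BilinForm.IsRefl B := by
      intro a b h
      rw [hBsymm]
      exact h
    have horth := LinearMap.BilinForm.finrank_add_finrank_orthogonal (B := B) hrefl Im
    have htop : LinearMap.BilinForm.orthogonal B ⊤ = ⊥ := by
      rw [Submodule.eq_bot_iff]
      intro u hu
      rw [LinearMap.BilinForm.mem_orthogonal_iff] at hu
      exact hBnondeg u fun w => hrefl _ _ (hu w Submodule.mem_top)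
    rw [htop, inf_bot_eq, finrank_bot, add_zero] at horth
    set O := LinearMap.BilinForm.orthogonal B Im with hOdef
    have heO : e ∈ O := by
      rw [hOdef, LinearMap.BilinForm.mem_orthogonal_iff]
      rintro n ⟨x', rfl⟩
      exact step4 x₀ x'
    have hspanO : Submodule.span ℝ {e} ≤ O := by
      rw [Submodule.span_le, Set.singleton_subset_iff]
      exact heO
    have h1O : 1 ≤ finrank ℝ O := by
      have h := Submodule.finrank_mono hspanO
      rwa [finrank_span_singleton he0] at h
    have hOfin : finrank ℝ O = 1 := by omega
    have hOe : Submodule.span ℝ {e} = O :=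
      Submodule.eq_of_le_of_finrank_le hspanO
        (by rw [finrank_span_singleton he0, hOfin])
    -- the subspace N' of elements z with β x₀ z ∈ span e
    set mk := (Submodule.span ℝ {e}).mkQ with hmkdef
    set N' := LinearMap.ker (mk ∘ₗ β x₀) with hN'def
    have hrn' : finrank ℝ (LinearMap.range (mk ∘ₗ β x₀)) + finrank ℝ N' = finrank ℝ V :=
      LinearMap.finrank_range_add_finrank_ker (mk ∘ₗ β x₀)
    have hrange' : LinearMap.range (mk ∘ₗ β x₀) = Submodule.map mk Im := by
      rw [LinearMap.range_comp]
    have hspanIm : Submodule.span ℝ {e} ≤ Im := by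
      rw [Submodule.span_le, Set.singleton_subset_iff]
      exact he_mem
    have hIm_rn : finrank ℝ (Submodule.map mk Im) + 1 = k := by
      have hg := LinearMap.finrank_range_add_finrank_ker (mk ∘ₗ Im.subtype)
      have hr : LinearMap.range (mk ∘ₗ Im.subtype) = Submodule.map mk Im := by
        rw [LinearMap.range_comp, Submodule.range_subtype]
      have hk : LinearMap.ker (mk ∘ₗ Im.subtype)
          = Submodule.comap Im.subtype (Submodule.span ℝ {e}) := by
        rw [LinearMap.ker_comp, hmkdef, Submodule.ker_mkQ]
      have hkfin : finrank ℝ (LinearMap.ker (mk ∘ₗ Im.subtype)) = 1 := by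
        rw [hk, (Submodule.comapSubtypeEquivOfLe hspanIm).finrank_eq,
          finrank_span_singleton he0]
      rw [hr, hkfin] at hg
      exact hg
    have hsub : N' ≤ K := by
      intro z hzmem
      have hz' : β x₀ z ∈ Submodule.span ℝ {e} := by
        have h := LinearMap.mem_ker.mp hzmem
        rw [LinearMap.comp_apply] at h
        rwa [← Submodule.ker_mkQ (Submodule.span ℝ {e}), LinearMap.mem_ker]
      apply hKmem
      intro y
      rw [hβsymm, hOe, hOdef, LinearMap.BilinForm.mem_orthogonal_iff]
      rintro n ⟨x', rfl⟩
      show B (β x₀ x') (β y z) = 0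
      have h := flat' x₀ y x' z
      obtain ⟨a, ha⟩ := Submodule.mem_span_singleton.mp hz'
      rw [h, ← ha, map_smul, LinearMap.smul_apply, smul_eq_mul, hBsymm, step4 y x', mul_zero]
    have hfinK : finrank ℝ N' ≤ finrank ℝ K := Submodule.finrank_mono hsub
    rw [hrange'] at hrn'
    omega
end
end

section
/- Let V and W be finite-dimensional real inner product spaces with dim W < dim V − 2, and let β : V × V → W be a symmetric bilinear map. If W(β) = 0, then there exist a vector ξ ∈ W and a linear subspace V₁ ⊆ V with dim V₁ ≥ dim V − dim W such that β(x,y) = ⟨x,y⟩ ξ for all x ∈ V₁ and all y ∈ V. -/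
open scoped RealInnerProductSpace
open Module

noncomputable section

variable {V W : Type*}
  [NormedAddCommGroup V] [InnerProductSpace ℝ V] [FiniteDimensional ℝ V]
  [NormedAddCommGroup W] [InnerProductSpace ℝ W] [FiniteDimensional ℝ W]

/-! ### Auxiliary machinery: flat bilinear forms (Moore-type lemmas) -/

section RankPerturb

variable {V₀ U₀ : Type*} [AddCommGroup V₀] [Module ℝ V₀]
  [NormedAddCommGroup U₀] [NormedSpace ℝ U₀] [FiniteDimensional ℝ U₀]

/-- If `rank (A + t C) ≤ rank A` for all `t`, then `C (ker A) ⊆ range A`. -/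
theorem rank_perturb (A C : V₀ →ₗ[ℝ] U₀)
    (h : ∀ t : ℝ, finrank ℝ (LinearMap.range (A + t • C)) ≤ finrank ℝ (LinearMap.range A))
    {z : V₀} (hz : A z = 0) : C z ∈ LinearMap.range A := by
  by_contra hcz
  set r := finrank ℝ (LinearMap.range A) with hr
  choose v hv using fun j : Fin r => ((finBasis ℝ (LinearMap.range A)) j).2
  let g : Fin (r + 1) → U₀ := Fin.snoc (fun j => ((finBasis ℝ (LinearMap.range A)) j : U₀)) (C z)
  have hspan : Submodule.span ℝ
      (Set.range fun j : Fin r => ((finBasis ℝ (LinearMap.range A)) j : U₀))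
      = LinearMap.range A := by
    have : (fun j : Fin r => ((finBasis ℝ (LinearMap.range A)) j : U₀)) =
        (LinearMap.range A).subtype ∘ (finBasis ℝ (LinearMap.range A)) := rfl
    rw [this, Set.range_comp, Submodule.span_image, Basis.span_eq, Submodule.map_top,
      Submodule.range_subtype]
  have li : LinearIndependent ℝ g := by
    rw [linearIndependent_fin_snoc]
    refine ⟨?_, ?_⟩
    · exact (finBasis ℝ (LinearMap.range A)).linearIndependent.map'
        (LinearMap.range A).subtype (Submodule.ker_subtype _)
    · rw [hspan]; exact hcz
  set X : Submodule ℝ U₀ := Submodule.span ℝ (Set.range g) with hX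
  let Bx : Basis (Fin (r + 1)) ℝ X := Basis.span li
  obtain ⟨Y, hY⟩ := Submodule.exists_isCompl X
  let π : U₀ →ₗ[ℝ] X := X.linearProjOfIsCompl Y hY
  have hπ : ∀ u : X, π (u : U₀) = u := fun u => Submodule.linearProjOfIsCompl_apply_left hY u
  let orig : ℝ → Fin (r + 1) → U₀ := fun t =>
    Fin.snoc (fun j => (A + t • C) (v j)) (C z)
  let F : ℝ → Fin (r + 1) → X := fun t j => π (orig t j)
  have horig0 : orig 0 = g := by
    funext j
    refine Fin.lastCases ?_ (fun i => ?_) j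
    · simp [orig, g]
    · simp [orig, g, Fin.snoc_castSucc, hv]
  have hgX : ∀ j, g j ∈ X := fun j => Submodule.subset_span (Set.mem_range_self j)
  have hF0 : ∀ j, F 0 j = Bx j := by
    intro j
    have h1 : Bx j = ⟨g j, hgX j⟩ := Basis.span_apply li j
    have h2 : F 0 j = π (g j) := by rw [show F 0 j = π (orig 0 j) from rfl, horig0]
    rw [h1, h2]
    exact hπ ⟨g j, hgX j⟩
  classical
  let q : ℝ → ℝ := fun t => (Matrix.of fun i j => Bx.equivFun (F t j) i).det
  have hq0 : q 0 = 1 := by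
    have : (Matrix.of fun i j => Bx.equivFun (F 0 j) i) = 1 := by
      ext i j
      simp only [Matrix.of_apply]
      rw [hF0 j, Bx.equivFun_self]
      simp [Matrix.one_apply, eq_comm, Pi.single_apply]
    rw [show q 0 = (Matrix.of fun i j => Bx.equivFun (F 0 j) i).det from rfl, this,
      Matrix.det_one]
  have hqt : ∀ t : ℝ, t ≠ 0 → q t = 0 := by
    intro t ht
    have hmem : ∀ j, orig t j ∈ LinearMap.range (A + t • C) := by
      intro j
      refine Fin.lastCases ?_ (fun i => ?_) j
      · have : orig t (Fin.last r) = C z := by simp [orig]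
        rw [this]
        exact ⟨t⁻¹ • z, by simp [map_smul, hz, smul_smul, inv_mul_cancel₀ ht]⟩
      · exact ⟨v i, by simp [orig]⟩
    have hdep : ¬ LinearIndependent ℝ (orig t) := by
      intro hli
      have hle : (r + 1 : ℕ) ≤ finrank ℝ (LinearMap.range (A + t • C)) := by
        let orig' : Fin (r + 1) → LinearMap.range (A + t • C) := fun j => ⟨orig t j, hmem j⟩
        have hli' : LinearIndependent ℝ orig' := by
          have hco : orig t = (LinearMap.range (A + t • C)).subtype ∘ orig' := rfl
          rw [hco] at hli
          exact hli.of_comp _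
        simpa using hli'.fintype_card_le_finrank
      have := h t
      omega
    have hdepF : ¬ LinearIndependent ℝ (F t) := fun hli => hdep (hli.of_comp π)
    obtain ⟨gg, hsum, i₀, hgi₀⟩ := Fintype.not_linearIndependent_iff.mp hdepF
    have hmv : (Matrix.of fun i j => Bx.equivFun (F t j) i).mulVec gg = 0 := by
      funext i
      have := congrFun (congrArg (Bx.equivFun) hsum) i
      simp only [map_sum, map_smul, map_zero] at this
      simpa [Matrix.mulVec, dotProduct, mul_comm] using this
    have hne : gg ≠ 0 := fun hg0 => hgi₀ (by rw [hg0]; rfl)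
    exact Matrix.exists_mulVec_eq_zero_iff.mp ⟨gg, hne, hmv⟩
  have hqcont : Continuous q := by
    apply Continuous.matrix_det
    apply continuous_matrix
    intro i j
    simp only [Matrix.of_apply]
    have horig' : ∀ t, orig t j =
        ((Fin.snoc (fun j' : Fin r => A (v j')) (C z) : Fin (r+1) → U₀) j) +
        t • ((Fin.snoc (fun j' : Fin r => C (v j')) (0 : U₀) : Fin (r+1) → U₀) j) := by
      intro t
      refine Fin.lastCases ?_ (fun i' => ?_) j <;> simp [orig]
    have : (fun t => Bx.equivFun (F t j) i) = fun t =>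
        Bx.equivFun (π (((Fin.snoc (fun j' : Fin r => A (v j')) (C z) : Fin (r+1) → U₀) j))) i +
        t * Bx.equivFun (π (((Fin.snoc (fun j' : Fin r => C (v j')) (0 : U₀) :
          Fin (r+1) → U₀) j))) i := by
      funext t
      rw [show F t j = π (orig t j) from rfl, horig' t]
      simp [map_add, map_smul]
    rw [this]
    fun_prop
  have h1 : Filter.Tendsto q (nhdsWithin 0 {(0:ℝ)}ᶜ) (nhds 1) := by
    rw [← hq0]
    exact (hqcont.tendsto 0).mono_left nhdsWithin_le_nhds
  have h2 : Filter.Tendsto q (nhdsWithin 0 {(0:ℝ)}ᶜ) (nhds 0) := by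
    apply Filter.Tendsto.congr' _ tendsto_const_nhds
    filter_upwards [self_mem_nhdsWithin] with t ht
    exact (hqt t ht).symm
  exact one_ne_zero (tendsto_nhds_unique h1 h2)

/-- There is a point `x₀` of maximal rank, and for it `μ y z ∈ range (μ x₀)`
whenever `μ x₀ z = 0`. -/
theorem moore_ker (μ : V₀ →ₗ[ℝ] V₀ →ₗ[ℝ] U₀) :
    ∃ x₀ : V₀,
      (∀ x : V₀, finrank ℝ (LinearMap.range (μ x)) ≤ finrank ℝ (LinearMap.range (μ x₀))) ∧
      ∀ y z : V₀, μ x₀ z = 0 → μ y z ∈ LinearMap.range (μ x₀) := by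
  have hbdd : BddAbove (Set.range fun x : V₀ => finrank ℝ (LinearMap.range (μ x))) := by
    refine ⟨finrank ℝ U₀, ?_⟩
    rintro n ⟨x, rfl⟩
    exact Submodule.finrank_le _
  have hne : (Set.range fun x : V₀ => finrank ℝ (LinearMap.range (μ x))).Nonempty :=
    ⟨_, ⟨0, rfl⟩⟩
  obtain ⟨x₀, hx₀⟩ := Nat.sSup_mem hne hbdd
  refine ⟨x₀, ?_, ?_⟩
  · intro x
    exact le_of_le_of_eq (le_csSup hbdd ⟨x, rfl⟩) hx₀.symm
  · intro y z hz
    apply rank_perturb (μ x₀) (μ y) _ hz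
    intro t
    have : μ x₀ + t • μ y = μ (x₀ + t • y) := by
      rw [map_add, map_smul]
    rw [this]
    exact le_of_le_of_eq (le_csSup hbdd ⟨_, rfl⟩) hx₀.symm

end RankPerturb

/-- Moore's lemma, positive definite case: a flat symmetric bilinear map `V × V → W`
vanishes identically on a subspace of codimension at most `dim W`. -/
theorem moore_pos {V W : Type*}
    [NormedAddCommGroup V] [InnerProductSpace ℝ V] [FiniteDimensional ℝ V]
    [NormedAddCommGroup W] [InnerProductSpace ℝ W] [FiniteDimensional ℝ W]
    (μ : V →ₗ[ℝ] V →ₗ[ℝ] W) (hsym : ∀ x y, μ x y = μ y x)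
    (flat : ∀ x z y w : V, ⟪μ x z, μ y w⟫ = ⟪μ x w, μ y z⟫) :
    ∃ V₁ : Submodule ℝ V, finrank ℝ V ≤ finrank ℝ V₁ + finrank ℝ W ∧
      ∀ x ∈ V₁, ∀ y : V, μ x y = 0 := by
  obtain ⟨x₀, hmax, hker⟩ := moore_ker μ
  refine ⟨LinearMap.ker (μ x₀), ?_, ?_⟩
  · have h1 := LinearMap.finrank_range_add_finrank_ker (μ x₀)
    have h2 : finrank ℝ (LinearMap.range (μ x₀)) ≤ finrank ℝ W := Submodule.finrank_le _
    omega
  · intro x hx y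
    have hx' : μ x₀ x = 0 := hx
    obtain ⟨w, hw⟩ := hker y x hx'
    have h0 : ⟪μ y x, μ y x⟫ = 0 := by
      calc ⟪μ y x, μ y x⟫ = ⟪μ y x, μ x₀ w⟫ := by rw [hw]
        _ = ⟪μ x₀ x, μ y w⟫ := by rw [flat y x x₀ w, real_inner_comm]
        _ = 0 := by rw [hx', inner_zero_left]
    have h0' : μ y x = 0 := by
      rwa [real_inner_self_eq_norm_sq, pow_eq_zero_iff (by norm_num), norm_eq_zero] at h0
    rw [hsym x y, h0']

/-! ### The Lorentzian pairing on `W × ℝ × ℝ` -/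

/-- Lorentzian pairing on `W × ℝ × ℝ`. -/
def lb {W : Type*} [NormedAddCommGroup W] [InnerProductSpace ℝ W]
    (p q : W × ℝ × ℝ) : ℝ := ⟪p.1, q.1⟫ + p.2.1 * q.2.2 + q.2.1 * p.2.2

lemma lb_symm {W : Type*} [NormedAddCommGroup W] [InnerProductSpace ℝ W]
    (p q : W × ℝ × ℝ) : lb p q = lb q p := by
  simp [lb, real_inner_comm]; ring

/-- Two isotropic, mutually orthogonal vectors in Lorentzian `W × ℝ × ℝ` are proportional. -/
lemma null_prop {W : Type*} [NormedAddCommGroup W] [InnerProductSpace ℝ W]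
    (u u' : W × ℝ × ℝ) (hu : lb u u = 0) (hu' : lb u' u' = 0)
    (huu' : lb u u' = 0) :
    (u.2.1 - u.2.2) • u' = (u'.2.1 - u'.2.2) • u := by
  obtain ⟨w, a, c⟩ := u
  obtain ⟨w', a', c'⟩ := u'
  simp only [lb] at hu hu' huu'
  set D := a - c with hD
  set D' := a' - c' with hD'
  have hw : ⟪D • w' - D' • w, D • w' - D' • w⟫ =
      D^2 * ⟪w',w'⟫ - 2*D*D'*⟪w,w'⟫ + D'^2 * ⟪w,w⟫ := by
    simp only [inner_sub_left, inner_sub_right, real_inner_smul_left, real_inner_smul_right,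
      real_inner_comm w w']
    ring
  have hac : (D*a' - D'*a) - (D*c' - D'*c) = 0 := by simp only [hD, hD']; ring
  have hq : ⟪D • w' - D' • w, D • w' - D' • w⟫ + 2*(D*a' - D'*a)*(D*c' - D'*c) = 0 := by
    rw [hw]; linear_combination (D^2) * hu' + (D'^2) * hu - 2*D*D' * huu'
  have h1 : ⟪D • w' - D' • w, D • w' - D' • w⟫ ≥ 0 := real_inner_self_nonneg
  have hasq : (D*a' - D'*a) = (D*c' - D'*c) := by linarith
  have hq2 : ⟪D • w' - D' • w, D • w' - D' • w⟫ + 2*(D*a' - D'*a)^2 = 0 := by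
    linear_combination hq + 2*(D*a' - D'*a)*hac
  have h2 : ⟪D • w' - D' • w, D • w' - D' • w⟫ = 0 ∧ (D*a' - D'*a) = 0 := by
    have hy : (D*a' - D'*a)^2 = 0 := by nlinarith [sq_nonneg (D*a' - D'*a)]
    have hy0 : (D*a' - D'*a) = 0 :=
      pow_eq_zero_iff (n := 2) (by norm_num) |>.mp hy
    exact ⟨by nlinarith [sq_nonneg (D*a' - D'*a)], hy0⟩
  have hwz : D • w' - D' • w = 0 := by
    rw [← inner_self_eq_zero (𝕜 := ℝ)]; exact h2.1
  have haz : D*a' - D'*a = 0 := h2.2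
  have hcz : D*c' - D'*c = 0 := by rw [← hasq]; exact haz
  refine Prod.ext ?_ (Prod.ext ?_ ?_)
  · simpa [sub_eq_zero] using hwz
  · simpa [sub_eq_zero] using sub_eq_zero.mpr (show D*a' = D'*a by linarith)
  · simpa [sub_eq_zero] using sub_eq_zero.mpr (show D*c' = D'*c by linarith)

/-! ### Bilinearity and symmetry of the Schouten tensor -/

section SchoutenBilinear
set_option linter.unusedSectionVars false

variable (β : V →ₗ[ℝ] V →ₗ[ℝ] W)

lemma Rt_apply (x₁ x₂ x₃ x₄ : V) :
    Rt (fun x y => β x y) x₁ x₂ x₃ x₄ = ⟪β x₁ x₃, β x₂ x₄⟫ - ⟪β x₁ x₄, β x₂ x₃⟫ := by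
  simp only [Rt, kn]
  rw [real_inner_comm (β x₂ x₄) (β x₁ x₃), real_inner_comm (β x₂ x₃) (β x₁ x₄)]
  ring

lemma ric_add_left (x x' y : V) : ric (fun x y => β x y) (x + x') y =
    ric (fun x y => β x y) x y + ric (fun x y => β x y) x' y := by
  simp only [ric, Rt_apply, map_add, LinearMap.add_apply, inner_add_left, inner_add_right]
  rw [← Finset.sum_add_distrib]
  congr 1; funext i; ring

lemma ric_smul_left (c : ℝ) (x y : V) : ric (fun x y => β x y) (c • x) y =
    c * ric (fun x y => β x y) x y := by
  simp only [ric, Rt_apply, map_smul, LinearMap.smul_apply, real_inner_smul_left,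
    real_inner_smul_right]
  rw [Finset.mul_sum]
  congr 1; funext i; ring

lemma ric_symm (hβ : ∀ x y, β x y = β y x) (x y : V) :
    ric (fun x y => β x y) x y = ric (fun x y => β x y) y x := by
  simp only [ric, Rt_apply]
  congr 1; funext i
  rw [hβ x y]
  congr 1
  rw [real_inner_comm, hβ x (stdOrthonormalBasis ℝ V i), hβ (stdOrthonormalBasis ℝ V i) y]

lemma ric_add_right (hβ : ∀ x y, β x y = β y x) (x y y' : V) :
    ric (fun x y => β x y) x (y + y') =
    ric (fun x y => β x y) x y + ric (fun x y => β x y) x y' := by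
  rw [ric_symm β hβ, ric_add_left, ric_symm β hβ, ric_symm β hβ y' x]

lemma ric_smul_right (hβ : ∀ x y, β x y = β y x) (c : ℝ) (x y : V) :
    ric (fun x y => β x y) x (c • y) = c * ric (fun x y => β x y) x y := by
  rw [ric_symm β hβ, ric_smul_left, ric_symm β hβ y x]

/-- The Schouten tensor of a bilinear `β`, as a bilinear map. -/
def Lmap (hβ : ∀ x y, β x y = β y x) : V →ₗ[ℝ] V →ₗ[ℝ] ℝ :=
  LinearMap.mk₂ ℝ (schouten (fun x y => β x y))
    (fun x x' y => by
      simp only [schouten, ric_add_left, inner_add_left]; ring)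
    (fun c x y => by
      simp only [schouten, ric_smul_left, real_inner_smul_left, smul_eq_mul]; ring)
    (fun x y y' => by
      simp only [schouten, ric_add_right β hβ, inner_add_right]; ring)
    (fun c x y => by
      simp only [schouten, ric_smul_right β hβ, real_inner_smul_right, smul_eq_mul]; ring)

lemma Lmap_apply (hβ : ∀ x y, β x y = β y x) (x y : V) :
    Lmap β hβ x y = schouten (fun x y => β x y) x y := rfl

lemma Lmap_symm (hβ : ∀ x y, β x y = β y x) (x y : V) :
    Lmap β hβ x y = Lmap β hβ y x := by
  simp only [Lmap_apply, schouten, ric_symm β hβ x y, real_inner_comm x y]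

end SchoutenBilinear

set_option maxHeartbeats 2000000

/-- If `dim W < dim V − 2` and the Weyl tensor of the symmetric bilinear map
`β : V × V → W` vanishes, then there are `ξ ∈ W` and a subspace `V₁ ⊆ V` with
`dim V₁ ≥ dim V − dim W` such that `β(x,y) = ⟨x,y⟩ ξ` for all `x ∈ V₁`, `y ∈ V`. -/
theorem stmt3 (β : V →ₗ[ℝ] V →ₗ[ℝ] W) (hβ : ∀ x y, β x y = β y x)
    (hdim : finrank ℝ W + 2 < finrank ℝ V)
    (hW : ∀ x₁ x₂ x₃ x₄ : V, Wt (fun x y => β x y) x₁ x₂ x₃ x₄ = 0) :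
    ∃ ξ : W, ∃ V₁ : Submodule ℝ V,
      finrank ℝ V ≤ finrank ℝ (V₁ : Submodule ℝ V) + finrank ℝ W ∧
      ∀ x ∈ V₁, ∀ y : V, β x y = ⟪x, y⟫ • ξ := by
  classical
  obtain ⟨L, hLdef⟩ : ∃ L : V →ₗ[ℝ] V →ₗ[ℝ] ℝ, L = Lmap β hβ := ⟨_, rfl⟩
  have hLsymm : ∀ x y : V, L x y = L y x := by
    intro x y; rw [hLdef]; exact Lmap_symm β hβ x y
  -- the Gauss-type identity
  have hG : ∀ x z y w : V, ⟪β x z, β y w⟫ - ⟪β x w, β y z⟫ =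
      L x z * ⟪y,w⟫ + L y w * ⟪x,z⟫ - L x w * ⟪y,z⟫ - L y z * ⟪x,w⟫ := by
    intro x z y w
    have h0 := hW x y z w
    simp only [Wt, sub_eq_zero] at h0
    rw [Rt_apply β x y z w] at h0
    rw [hLdef]
    simpa only [knLG, Lmap_apply] using h0
  -- the Lorentzian bilinear map μ = (β, ⟨·,·⟩, -L)
  obtain ⟨μ, hμ⟩ : ∃ μ : V →ₗ[ℝ] V →ₗ[ℝ] (W × ℝ × ℝ),
      ∀ x y : V, μ x y = (β x y, ⟪x,y⟫, - L x y) :=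
    ⟨LinearMap.mk₂ ℝ (fun x y => (β x y, ⟪x,y⟫, - L x y))
    (fun x x' y => by
      simp only [map_add, LinearMap.add_apply, inner_add_left, Prod.mk_add_mk, Prod.mk.injEq]
      exact ⟨by first | trivial | ring, by first | trivial | ring, by first | trivial | ring⟩)
    (fun c x y => by
      simp only [map_smul, LinearMap.smul_apply, real_inner_smul_left, Prod.smul_mk,
        smul_eq_mul, Prod.mk.injEq]
      exact ⟨by first | trivial | ring, by first | trivial | ring, by first | trivial | ring⟩)
    (fun x y y' => by
      simp only [map_add, inner_add_right, Prod.mk_add_mk, Prod.mk.injEq]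
      exact ⟨by first | trivial | ring, by first | trivial | ring, by first | trivial | ring⟩)
    (fun c x y => by
      simp only [map_smul, real_inner_smul_right, Prod.smul_mk, smul_eq_mul, Prod.mk.injEq]
      exact ⟨by first | trivial | ring, by first | trivial | ring, by first | trivial | ring⟩),
    fun x y => rfl⟩
  have hbflat : ∀ x z y w : V, lb (μ x z) (μ y w) = lb (μ x w) (μ y z) := by
    intro x z y w
    simp only [hμ, lb]
    linear_combination hG x z y w
  obtain ⟨x₀, hmax, hker⟩ := moore_ker μ
  have hrange_le : finrank ℝ (LinearMap.range (μ x₀)) ≤ finrank ℝ W + 2 := by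
    have h1 : finrank ℝ (W × ℝ × ℝ) = finrank ℝ W + 2 := by
      simp [Module.finrank_prod]
    have := Submodule.finrank_le (LinearMap.range (μ x₀))
    omega
  -- find a nonzero kernel vector z₀
  obtain ⟨z₀, hz₀K, hz₀ne⟩ : ∃ z₀ : V, μ x₀ z₀ = 0 ∧ z₀ ≠ 0 := by
    by_contra hcon
    push_neg at hcon
    have hkb : LinearMap.ker (μ x₀) = ⊥ := by
      rw [Submodule.eq_bot_iff]
      intro z hzk
      by_contra hzne
      exact hzne (hcon z hzk)
    have := LinearMap.finrank_range_add_finrank_ker (μ x₀)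
    rw [hkb, finrank_bot] at this
    omega
  -- orthogonality of all values on the kernel
  have horth : ∀ y z y' z' : V, μ x₀ z = 0 → μ x₀ z' = 0 →
      lb (μ y z) (μ y' z') = 0 := by
    intro y z y' z' hz hz'
    obtain ⟨w, hw⟩ := hker y z hz
    rw [← hw, lb_symm, hbflat y' z' x₀ w, hz']
    simp [lb]
  have hane : ⟪z₀,z₀⟫ ≠ 0 := fun h0 => hz₀ne (inner_self_eq_zero.mp h0)
  have hapos : (0:ℝ) ≤ ⟪z₀,z₀⟫ := real_inner_self_nonneg
  have hζself : lb (μ z₀ z₀) (μ z₀ z₀) = 0 := horth z₀ z₀ z₀ z₀ hz₀K hz₀K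
  have hζeq : ⟪β z₀ z₀, β z₀ z₀⟫ = 2 * ⟪z₀,z₀⟫ * L z₀ z₀ := by
    have h0 := hζself
    simp only [hμ, lb] at h0
    linarith
  -- D(ζ) ≠ 0
  have hDζ : ⟪z₀,z₀⟫ + L z₀ z₀ ≠ 0 := by
    intro h0
    have himg : ⟪β z₀ z₀, β z₀ z₀⟫ ≥ 0 := real_inner_self_nonneg
    have hLa : L z₀ z₀ = - ⟪z₀,z₀⟫ := by linarith
    rw [hLa] at hζeq
    nlinarith [himg, mul_self_pos.mpr hane, hζeq]
  obtain ⟨ξ, hξdef⟩ : ∃ ξ : W, ξ = (⟪z₀,z₀⟫:ℝ)⁻¹ • β z₀ z₀ := ⟨_, rfl⟩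
  -- values on the kernel are inner-product multiples of ξ
  have hkey : ∀ z y : V, μ x₀ z = 0 →
      β y z = ⟪y,z⟫ • ξ ∧ L y z = ⟪y,z⟫ * (L z₀ z₀ / ⟪z₀,z₀⟫) := by
    intro z y hz
    have hprop := null_prop (μ z₀ z₀) (μ y z) hζself (horth y z y z hz hz)
      (horth z₀ z₀ y z hz₀K hz)
    simp only [hμ] at hprop
    have h1 := congrArg Prod.fst hprop
    have h2 := congrArg (fun p : W × ℝ × ℝ => p.2.1) hprop
    simp only [Prod.smul_mk, smul_eq_mul] at h1 h2
    have h2' : (⟪z₀,z₀⟫ + L z₀ z₀) * ⟪y,z⟫ = (⟪y,z⟫ + L y z) * ⟪z₀,z₀⟫ := by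
      simpa [sub_neg_eq_add] using h2
    have hLyz : L y z = ⟪y,z⟫ * (L z₀ z₀ / ⟪z₀,z₀⟫) := by
      rw [mul_div_assoc', eq_div_iff hane]
      linear_combination (-1 : ℝ) * h2'
    refine ⟨?_, hLyz⟩
    have hφ : ⟪y,z⟫ + L y z = (⟪z₀,z₀⟫ + L z₀ z₀) * ⟪y,z⟫ * (⟪z₀,z₀⟫:ℝ)⁻¹ := by
      rw [eq_mul_inv_iff_mul_eq₀ hane]
      linear_combination (-1 : ℝ) * h2'
    have h1' : (⟪z₀,z₀⟫ + L z₀ z₀) • β y z = (⟪y,z⟫ + L y z) • β z₀ z₀ := by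
      simpa [sub_neg_eq_add] using h1
    apply smul_right_injective W hDζ
    show (⟪z₀,z₀⟫ + L z₀ z₀) • β y z = (⟪z₀,z₀⟫ + L z₀ z₀) • (⟪y,z⟫ • ξ)
    rw [h1', hφ, hξdef]
    simp only [smul_smul]
    try congr 1
    try ring
  have hLz₀ : L z₀ z₀ / ⟪z₀,z₀⟫ = ⟪ξ,ξ⟫ / 2 := by
    rw [hξdef, real_inner_smul_left, real_inner_smul_right, hζeq]
    field_simp
  -- the reduced bilinear map β̃
  obtain ⟨βt, hβt⟩ : ∃ βt : V →ₗ[ℝ] V →ₗ[ℝ] W,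
      ∀ x y : V, βt x y = β x y - ⟪x,y⟫ • ξ :=
    ⟨LinearMap.mk₂ ℝ (fun x y => β x y - ⟪x,y⟫ • ξ)
    (fun x x' y => by
      simp only [map_add, LinearMap.add_apply, inner_add_left, add_smul]; abel)
    (fun c x y => by
      simp only [map_smul, LinearMap.smul_apply, real_inner_smul_left, smul_sub, smul_smul]
      try norm_num)
    (fun x y y' => by
      simp only [map_add, inner_add_right, add_smul]; abel)
    (fun c x y => by
      simp only [map_smul, real_inner_smul_right, smul_sub, smul_smul]
      try norm_num),
    fun x y => rfl⟩
  have hβtsym : ∀ x y : V, βt x y = βt y x := by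
    intro x y
    rw [hβt, hβt, hβ x y, real_inner_comm x y]
  -- reduced Schouten-type tensor
  obtain ⟨Lt, hLtdef⟩ : ∃ Lt : V → V → ℝ,
      ∀ x y : V, Lt x y = L x y - ⟪β x y, ξ⟫ + ⟪ξ,ξ⟫ / 2 * ⟪x,y⟫ := ⟨_, fun x y => rfl⟩
  have hLtsym : ∀ x y : V, Lt x y = Lt y x := by
    intro x y
    rw [hLtdef, hLtdef, hLsymm x y, hβ x y, real_inner_comm x y]
  -- Gauss identity for β̃
  have hGt : ∀ x z y w : V, ⟪βt x z, βt y w⟫ - ⟪βt x w, βt y z⟫ =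
      Lt x z * ⟪y,w⟫ + Lt y w * ⟪x,z⟫ - Lt x w * ⟪y,z⟫ - Lt y z * ⟪x,w⟫ := by
    intro x z y w
    simp only [hβt, hLtdef, inner_sub_left, inner_sub_right, real_inner_smul_left,
      real_inner_smul_right]
    linear_combination hG x z y w + ⟪x,z⟫ * real_inner_comm ξ (β y w)
      - ⟪x,w⟫ * real_inner_comm ξ (β y z)
  -- β̃ and L̃ vanish on the kernel K
  have hβtK : ∀ z y : V, μ x₀ z = 0 → βt z y = 0 := by
    intro z y hz
    rw [hβt]
    rw [hβ z y, (hkey z y hz).1, real_inner_comm y z, sub_self]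
  have hLtK : ∀ z y : V, μ x₀ z = 0 → Lt z y = 0 := by
    intro z y hz
    have hb : β z y = ⟪y,z⟫ • ξ := by rw [hβ z y, (hkey z y hz).1]
    have hL : L z y = ⟪y,z⟫ * (⟪ξ,ξ⟫/2) := by rw [hLsymm z y, (hkey z y hz).2, hLz₀]
    rw [hLtdef, hL, hb, real_inner_smul_left, real_inner_comm z y]
    ring
  -- L̃ vanishes identically
  have hLt0 : ∀ y w : V, Lt y w = 0 := by
    intro y w
    have h0 := hGt z₀ z₀ y w
    rw [hβtK z₀ z₀ hz₀K, hβtK z₀ w hz₀K] at h0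
    simp only [inner_zero_left, sub_zero, zero_sub] at h0
    rw [hLtK z₀ z₀ hz₀K, hLtK z₀ w hz₀K] at h0
    rw [show Lt y z₀ = 0 from (hLtsym y z₀).trans (hLtK z₀ y hz₀K)] at h0
    have h0' : Lt y w * ⟪z₀,z₀⟫ = 0 := by linarith [h0]
    exact (mul_eq_zero.mp h0').resolve_right hane
  -- β̃ is flat
  have hflat : ∀ x z y w : V, ⟪βt x z, βt y w⟫ = ⟪βt x w, βt y z⟫ := by
    intro x z y w
    have h0 := hGt x z y w
    rw [hLt0, hLt0, hLt0, hLt0] at h0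
    simp only [zero_mul, add_zero, sub_zero, zero_sub, zero_add] at h0
    linarith [h0]
  obtain ⟨V₁, hd, h0⟩ := moore_pos βt hβtsym hflat
  refine ⟨ξ, V₁, hd, ?_⟩
  intro x hx y
  have hv := h0 x hx y
  rw [hβt, sub_eq_zero] at hv
  exact hv
end
end

section
/- Let V and W be finite-dimensional real inner product spaces with dim V = n, and let β : V × V → W be a symmetric bilinear map with W(β) = 0. Equip W̃ = W ⊕ ℝ² with the Lorentzian inner product ⟨⟨(ξ,(s₁,s₂)), (η,(t₁,t₂))⟩⟩ = ⟨ξ,η⟩ + s₁t₂ + s₂t₁, and define the symmetric bilinear map β̃ : V × V → W̃ by β̃(x,y) = (β(x,y), ⟨x,y⟩, −L(β)(x,y)). Then β̃ is flat with respect to ⟨⟨·,·⟩⟩, i.e. ⟨⟨β̃(x₁,x₃), β̃(x₂,x₄)⟩⟩ − ⟨⟨β̃(x₁,x₄), β̃(x₂,x₃)⟩⟩ = 0 for all x₁,x₂,x₃,x₄ ∈ V. -/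
open scoped RealInnerProductSpace
open Module

noncomputable section

variable {V W : Type*}
  [NormedAddCommGroup V] [InnerProductSpace ℝ V] [FiniteDimensional ℝ V]
  [NormedAddCommGroup W] [InnerProductSpace ℝ W] [FiniteDimensional ℝ W]

/-- The Lorentzian inner product on `W̃ = W ⊕ ℝ²`:
`⟨⟨(ξ,(s₁,s₂)), (η,(t₁,t₂))⟩⟩ = ⟨ξ,η⟩ + s₁t₂ + s₂t₁`. -/
def lorentzProd (v w : W × ℝ × ℝ) : ℝ :=
  ⟪v.1, w.1⟫ + v.2.1 * w.2.2 + v.2.2 * w.2.1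

/-- If `W(β) = 0`, then the symmetric bilinear map
`β̃(x,y) = (β(x,y), ⟨x,y⟩, −L(β)(x,y))` with values in `W̃ = W ⊕ ℝ²` is flat with respect to
the Lorentzian inner product `⟨⟨·,·⟩⟩`. -/
theorem stmt5 (β : V →ₗ[ℝ] V →ₗ[ℝ] W) (hβ : ∀ x y, β x y = β y x)
    (hW : ∀ x₁ x₂ x₃ x₄ : V, Wt (fun x y => β x y) x₁ x₂ x₃ x₄ = 0) :
    ∀ x₁ x₂ x₃ x₄ : V,
      lorentzProd (β x₁ x₃, ⟪x₁, x₃⟫, -schouten (fun x y => β x y) x₁ x₃)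
          (β x₂ x₄, ⟪x₂, x₄⟫, -schouten (fun x y => β x y) x₂ x₄) -
        lorentzProd (β x₁ x₄, ⟪x₁, x₄⟫, -schouten (fun x y => β x y) x₁ x₄)
          (β x₂ x₃, ⟪x₂, x₃⟫, -schouten (fun x y => β x y) x₂ x₃) = 0 := by
  intro x₁ x₂ x₃ x₄
  have h := hW x₁ x₂ x₃ x₄
  simp only [Wt, Rt, kn, knLG, lorentzProd] at h ⊢
  rw [real_inner_comm (β x₂ x₄) (β x₁ x₃), real_inner_comm (β x₂ x₃) (β x₁ x₄)] at h
  rw [real_inner_comm (β x₂ x₄) (β x₁ x₃), real_inner_comm (β x₂ x₃) (β x₁ x₄)]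
  linarith
end
end

section
/- Let V and W be finite-dimensional real inner product spaces, λ ∈ (0,1), and β : V × V → W a nonzero symmetric bilinear map satisfying ‖β‖² ≤ λ·|trace β|². Then scal(β) ≥ ((1−λ)/λ)·‖β‖² > 0; in particular scal(β) > 0. -/
open scoped RealInnerProductSpace
open Module

noncomputable section

variable {V W : Type*}
  [NormedAddCommGroup V] [InnerProductSpace ℝ V] [FiniteDimensional ℝ V]
  [NormedAddCommGroup W] [InnerProductSpace ℝ W] [FiniteDimensional ℝ W]

lemma scal_eq_aux (β : V →ₗ[ℝ] V →ₗ[ℝ] W) (hβ : ∀ x y, β x y = β y x) :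
    scal (fun x y => β x y) =
      ‖btrace (fun x y => β x y)‖ ^ 2 - bnormSq (fun x y => β x y) := by
  classical
  have htr : ‖btrace (fun x y : V => β x y)‖ ^ 2
      = ∑ i, ∑ j, ⟪β (stdOrthonormalBasis ℝ V i) (stdOrthonormalBasis ℝ V i),
          β (stdOrthonormalBasis ℝ V j) (stdOrthonormalBasis ℝ V j)⟫ := by
    rw [← real_inner_self_eq_norm_sq]
    unfold btrace
    rw [sum_inner]
    exact Finset.sum_congr rfl fun i _ => by rw [inner_sum]
  rw [htr]
  unfold scal ric Rt kn bnormSq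
  rw [← Finset.sum_sub_distrib]
  refine Finset.sum_congr rfl fun i _ => ?_
  rw [← Finset.sum_sub_distrib]
  refine Finset.sum_congr rfl fun j _ => ?_
  have h1 : ⟪β (stdOrthonormalBasis ℝ V j) (stdOrthonormalBasis ℝ V j),
      β (stdOrthonormalBasis ℝ V i) (stdOrthonormalBasis ℝ V i)⟫
      = ⟪β (stdOrthonormalBasis ℝ V i) (stdOrthonormalBasis ℝ V i),
      β (stdOrthonormalBasis ℝ V j) (stdOrthonormalBasis ℝ V j)⟫ := real_inner_comm _ _
  have h2 : ⟪β (stdOrthonormalBasis ℝ V j) (stdOrthonormalBasis ℝ V i),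
      β (stdOrthonormalBasis ℝ V i) (stdOrthonormalBasis ℝ V j)⟫
      = ‖β (stdOrthonormalBasis ℝ V i) (stdOrthonormalBasis ℝ V j)‖ ^ 2 := by
    rw [hβ (stdOrthonormalBasis ℝ V j) (stdOrthonormalBasis ℝ V i),
      real_inner_self_eq_norm_sq]
  have h3 : ⟪β (stdOrthonormalBasis ℝ V i) (stdOrthonormalBasis ℝ V j),
      β (stdOrthonormalBasis ℝ V j) (stdOrthonormalBasis ℝ V i)⟫
      = ‖β (stdOrthonormalBasis ℝ V i) (stdOrthonormalBasis ℝ V j)‖ ^ 2 := by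
    rw [hβ (stdOrthonormalBasis ℝ V j) (stdOrthonormalBasis ℝ V i),
      real_inner_self_eq_norm_sq]
  rw [h1, h2, h3]
  ring

lemma bnormSq_pos (β : V →ₗ[ℝ] V →ₗ[ℝ] W) (hne : β ≠ 0) :
    0 < bnormSq (fun x y => β x y) := by
  classical
  have : ∃ i j, β (stdOrthonormalBasis ℝ V i) (stdOrthonormalBasis ℝ V j) ≠ 0 := by
    by_contra h
    push_neg at h
    apply hne
    apply (stdOrthonormalBasis ℝ V).toBasis.ext
    intro i
    apply (stdOrthonormalBasis ℝ V).toBasis.ext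
    intro j
    simpa using h i j
  obtain ⟨i, j, hij⟩ := this
  have hpos : 0 < ‖β (stdOrthonormalBasis ℝ V i) (stdOrthonormalBasis ℝ V j)‖ ^ 2 :=
    pow_pos (norm_pos_iff.mpr hij) 2
  unfold bnormSq
  calc 0 < ‖β (stdOrthonormalBasis ℝ V i) (stdOrthonormalBasis ℝ V j)‖ ^ 2 := hpos
    _ ≤ ∑ l, ‖β (stdOrthonormalBasis ℝ V i) (stdOrthonormalBasis ℝ V l)‖ ^ 2 :=
        Finset.single_le_sum
          (f := fun l => ‖β (stdOrthonormalBasis ℝ V i) (stdOrthonormalBasis ℝ V l)‖ ^ 2)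
          (fun l _ => by positivity) (Finset.mem_univ j)
    _ ≤ ∑ k, ∑ l, ‖β (stdOrthonormalBasis ℝ V k) (stdOrthonormalBasis ℝ V l)‖ ^ 2 :=
        Finset.single_le_sum
          (f := fun k => ∑ l, ‖β (stdOrthonormalBasis ℝ V k) (stdOrthonormalBasis ℝ V l)‖ ^ 2)
          (fun k _ => Finset.sum_nonneg fun l _ => by positivity) (Finset.mem_univ i)

/-- If `β ≠ 0` is a symmetric bilinear map with `‖β‖² ≤ λ |trace β|²` for some
`λ ∈ (0,1)`, then `scal(β) ≥ ((1−λ)/λ) ‖β‖² > 0`; in particular `scal(β) > 0`. -/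
theorem stmt7 (lam : ℝ) (hlam0 : 0 < lam) (hlam1 : lam < 1)
    (β : V →ₗ[ℝ] V →ₗ[ℝ] W) (hβ : ∀ x y, β x y = β y x) (hne : β ≠ 0)
    (hpinch : bnormSq (fun x y => β x y) ≤ lam * ‖btrace (fun x y => β x y)‖ ^ 2) :
    ((1 - lam) / lam) * bnormSq (fun x y => β x y) ≤ scal (fun x y => β x y) ∧
      0 < ((1 - lam) / lam) * bnormSq (fun x y => β x y) ∧
      0 < scal (fun x y => β x y) := by
  have hb := bnormSq_pos β hne
  have hs := scal_eq_aux β hβ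
  set B := bnormSq (fun x y => β x y) with hB
  have htr : B / lam ≤ ‖btrace (fun x y => β x y)‖ ^ 2 :=
    (div_le_iff₀' hlam0).mpr hpinch
  have h1 : ((1 - lam) / lam) * B ≤ scal (fun x y => β x y) := by
    rw [hs]
    have : ((1 - lam) / lam) * B = B / lam - B := by field_simp
    rw [this]
    linarith
  have h2 : 0 < ((1 - lam) / lam) * B := by
    apply mul_pos _ hb
    apply div_pos (by linarith) hlam0
  exact ⟨h1, h2, lt_of_lt_of_le h2 h1⟩
end
end

section
/- Let n ≥ 7 be an integer, V = ℝⁿ with its standard inner product, and W = ℝ² with orthonormal basis ξ₁, ξ₂. Fix a > 0, let A be the diagonal n×n matrix with diagonal entries (a, a, −a, −a, …, −a) (two entries equal to a and n−2 entries equal to −a), and define the symmetric bilinear map β : V × V → W by β(x,y) = ⟨Ax,y⟩ ξ₁. Then: (i) for every λ with n/(n−4)² ≤ λ < 1, one has ‖β‖² − λ·|trace β|² ≤ 0, so (‖β‖² − λ·|trace β|²)₊ = 0; (ii) Φ(β) = S¹ ∖ {ξ₂, −ξ₂}, where S¹ is the unit circle of W; (iii) ∫_{Φ(β)} |det β^♯(u)|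 dS_u > 0. In particular, the inequality of the form ((‖β‖² − λ·|trace β|²)₊)² ≥ ε·(∫_{Φ(β)} |det β^♯(u)| dS_u)^{4/n} fails for this β for every ε > 0. -/
open scoped RealInnerProductSpace
open Module

noncomputable section

variable {V W : Type*}
  [NormedAddCommGroup V] [InnerProductSpace ℝ V] [FiniteDimensional ℝ V]
  [NormedAddCommGroup W] [InnerProductSpace ℝ W] [FiniteDimensional ℝ W]

open MeasureTheory

/-- The diagonal entries `(a, a, −a, …, −a)` of the matrix `A`. -/
def dvec (n : ℕ) (a : ℝ) : Fin n → ℝ := fun i => if (i : ℕ) < 2 then a else -a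

/-- The symmetric bilinear map `β(x,y) = ⟨Ax, y⟩ ξ₁` where `A = diag(a,a,−a,…,−a)`. -/
def βex (n : ℕ) (a : ℝ) :
    EuclideanSpace ℝ (Fin n) → EuclideanSpace ℝ (Fin n) → EuclideanSpace ℝ (Fin 2) :=
  fun x y => (∑ i, dvec n a i * x i * y i) • EuclideanSpace.single (0 : Fin 2) (1 : ℝ)


namespace Stmt10Aux

open EuclideanSpace

/-- The diagonal linear map `A = diag(dvec n a)` on Euclidean space. -/
def Mlin (n : ℕ) (a : ℝ) : EuclideanSpace ℝ (Fin n) →ₗ[ℝ] EuclideanSpace ℝ (Fin n) :=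
  Matrix.toEuclideanLin (Matrix.diagonal (dvec n a))

lemma Mlin_apply (n : ℕ) (a : ℝ) (x : EuclideanSpace ℝ (Fin n)) (i : Fin n) :
    Mlin n a x i = dvec n a i * x i := by
  simp [Mlin, Matrix.toEuclideanLin_apply, Matrix.mulVec_diagonal]

lemma inner_Mlin_left (n : ℕ) (a : ℝ) (x y : EuclideanSpace ℝ (Fin n)) :
    ⟪Mlin n a x, y⟫ = ∑ i, dvec n a i * x i * y i := by
  simp [PiLp.inner_apply, Mlin_apply, mul_assoc]
  exact Finset.sum_congr rfl fun i _ => by ring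

lemma dvec_mul_self (n : ℕ) (a : ℝ) (i : Fin n) : dvec n a i * dvec n a i = a * a := by
  by_cases h : (i : ℕ) < 2 <;> simp [dvec, h]

lemma abs_dvec (n : ℕ) {a : ℝ} (ha : 0 < a) (i : Fin n) : |dvec n a i| = a := by
  by_cases h : (i : ℕ) < 2 <;> simp [dvec, h, abs_of_pos ha]

lemma inner_Mlin_Mlin (n : ℕ) (a : ℝ) (x : EuclideanSpace ℝ (Fin n)) :
    ⟪Mlin n a x, Mlin n a x⟫ = (a * a) * ⟪x, x⟫ := by
  simp only [PiLp.inner_apply, Mlin_apply, RCLike.inner_apply, conj_trivial,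
    Finset.mul_sum]
  refine Finset.sum_congr rfl fun i _ => ?_
  have := dvec_mul_self n a i
  ring_nf
  nlinarith [dvec_mul_self n a i]

lemma inner_beta (n : ℕ) (a : ℝ) (x y : EuclideanSpace ℝ (Fin n))
    (u : EuclideanSpace ℝ (Fin 2)) :
    ⟪βex n a x y, u⟫ = (∑ i, dvec n a i * x i * y i) * u 0 := by
  rw [βex, real_inner_smul_left, EuclideanSpace.inner_single_left]
  simp


section Trace

lemma sum_inner_map_eq_trace {V : Type*} [NormedAddCommGroup V] [InnerProductSpace ℝ V]
    [FiniteDimensional ℝ V] {ι : Type*} [Fintype ι] [DecidableEq ι] (b : OrthonormalBasis ι ℝ V)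
    (S : V →ₗ[ℝ] V) :
    ∑ i, ⟪S (b i), b i⟫ = LinearMap.trace ℝ V S := by
  rw [LinearMap.trace_eq_matrix_trace ℝ b.toBasis, Matrix.trace]
  refine Finset.sum_congr rfl fun i _ => ?_
  rw [Matrix.diag_apply, LinearMap.toMatrix_apply, OrthonormalBasis.coe_toBasis,
    OrthonormalBasis.coe_toBasis_repr_apply, OrthonormalBasis.repr_apply_apply,
    real_inner_comm]

lemma trace_Mlin (n : ℕ) (a : ℝ) :
    LinearMap.trace ℝ _ (Mlin n a) = ∑ i, dvec n a i := by
  rw [Mlin, Matrix.toEuclideanLin_eq_toLin,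
    LinearMap.trace_eq_matrix_trace ℝ (PiLp.basisFun 2 ℝ (Fin n)),
    LinearMap.toMatrix_toLin, Matrix.trace_diagonal]

def finEquiv (n : ℕ) (hn : 2 ≤ n) : {i : Fin n // (i : ℕ) < 2} ≃ Fin 2 where
  toFun i := ⟨i.1, i.2⟩
  invFun j := ⟨⟨j.1, lt_of_lt_of_le j.2 hn⟩, j.2⟩
  left_inv i := rfl
  right_inv j := rfl

lemma card_lt_two (n : ℕ) (hn : 2 ≤ n) :
    Fintype.card {i : Fin n // (i : ℕ) < 2} = 2 := by
  rw [Fintype.card_congr (finEquiv n hn), Fintype.card_fin]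

lemma filter_card (n : ℕ) (hn : 2 ≤ n) :
    (Finset.univ.filter fun i : Fin n => (i : ℕ) < 2).card = 2 := by
  rw [← Fintype.card_subtype, card_lt_two n hn]

lemma sum_dvec (n : ℕ) (a : ℝ) (hn : 2 ≤ n) :
    ∑ i, dvec n a i = ((4 : ℝ) - n) * a := by
  rw [show (∑ i, dvec n a i) =
      ∑ i ∈ Finset.univ.filter (fun i : Fin n => (i : ℕ) < 2), a
      + ∑ i ∈ Finset.univ.filter (fun i : Fin n => ¬ (i : ℕ) < 2), (-a) from ?_]
  · rw [Finset.sum_const, Finset.sum_const, filter_card n hn]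
    have h2 : (Finset.univ.filter fun i : Fin n => (i : ℕ) < 2).card
        + (Finset.univ.filter fun i : Fin n => ¬ (i : ℕ) < 2).card = n := by
      rw [Finset.card_filter_add_card_filter_not, Finset.card_univ, Fintype.card_fin]
    rw [filter_card n hn] at h2
    have : (Finset.univ.filter fun i : Fin n => ¬ (i : ℕ) < 2).card = n - 2 := by omega
    rw [this, nsmul_eq_mul, nsmul_eq_mul]
    have hcast : ((n - 2 : ℕ) : ℝ) = (n : ℝ) - 2 := by
      have : (2 : ℕ) ≤ n := hn
      push_cast [this]
      ring
    rw [hcast]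
    ring
  · rw [← Finset.sum_filter_add_sum_filter_not Finset.univ (fun i : Fin n => (i : ℕ) < 2)]
    congr 1
    · exact Finset.sum_congr rfl fun i hi => by
        simp only [Finset.mem_filter] at hi; simp [dvec, hi.2]
    · exact Finset.sum_congr rfl fun i hi => by
        simp only [Finset.mem_filter] at hi; simp [dvec, hi.2]

end Trace


section PartI

lemma norm_beta_sq (n : ℕ) (a : ℝ) (x y : EuclideanSpace ℝ (Fin n)) :
    ‖βex n a x y‖ ^ 2 = ⟪Mlin n a x, y⟫ ^ 2 := by
  rw [βex, norm_smul, inner_Mlin_left]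
  simp [EuclideanSpace.norm_single, mul_pow, sq_abs]

lemma parseval {V : Type*} [NormedAddCommGroup V] [InnerProductSpace ℝ V]
    [FiniteDimensional ℝ V] {ι : Type*} [Fintype ι] (b : OrthonormalBasis ι ℝ V) (v : V) :
    ∑ j, ⟪v, b j⟫ ^ 2 = ⟪v, v⟫ := by
  rw [← b.sum_inner_mul_inner v v]
  exact Finset.sum_congr rfl fun j _ => by rw [sq, real_inner_comm v (b j)]

lemma bnormSq_eq (n : ℕ) (a : ℝ) : bnormSq (βex n a) = n * (a * a) := by
  unfold bnormSq
  set b := stdOrthonormalBasis ℝ (EuclideanSpace ℝ (Fin n)) with hb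
  have key : ∀ i, ∑ j, ‖βex n a (b i) (b j)‖ ^ 2 = a * a := by
    intro i
    calc ∑ j, ‖βex n a (b i) (b j)‖ ^ 2 = ∑ j, ⟪Mlin n a (b i), b j⟫ ^ 2 :=
          Finset.sum_congr rfl fun j _ => norm_beta_sq n a (b i) (b j)
      _ = ⟪Mlin n a (b i), Mlin n a (b i)⟫ := parseval b _
      _ = (a * a) * ⟪b i, b i⟫ := inner_Mlin_Mlin n a (b i)
      _ = a * a := by
          rw [real_inner_self_eq_norm_mul_norm, b.orthonormal.1 i]; ring
  rw [Finset.sum_congr rfl fun i _ => key i, Finset.sum_const, Finset.card_univ,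
    Fintype.card_fin, finrank_euclideanSpace_fin, nsmul_eq_mul]

lemma btrace_eq (n : ℕ) (a : ℝ) (hn : 2 ≤ n) :
    btrace (βex n a) =
      (((4 : ℝ) - n) * a) • EuclideanSpace.single (0 : Fin 2) (1 : ℝ) := by
  unfold btrace
  set b := stdOrthonormalBasis ℝ (EuclideanSpace ℝ (Fin n)) with hb
  have step : ∀ i, βex n a (b i) (b i)
      = ⟪Mlin n a (b i), b i⟫ • EuclideanSpace.single (0 : Fin 2) (1 : ℝ) := by
    intro i; rw [βex, inner_Mlin_left]
  rw [Finset.sum_congr rfl fun i _ => step i, ← Finset.sum_smul,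
    sum_inner_map_eq_trace b (Mlin n a), trace_Mlin, sum_dvec n a hn]

lemma btrace_normSq (n : ℕ) (a : ℝ) (hn : 2 ≤ n) :
    ‖btrace (βex n a)‖ ^ 2 = ((n : ℝ) - 4) ^ 2 * a ^ 2 := by
  rw [btrace_eq n a hn, norm_smul]
  rw [EuclideanSpace.norm_single, norm_one, mul_one, Real.norm_eq_abs, sq_abs]
  ring

lemma partI (n : ℕ) (hn : 7 ≤ n) (a : ℝ) (lam : ℝ)
    (h1 : (n : ℝ) / ((n : ℝ) - 4) ^ 2 ≤ lam) :
    bnormSq (βex n a) - lam * ‖btrace (βex n a)‖ ^ 2 ≤ 0 := by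
  rw [bnormSq_eq, btrace_normSq n a (by omega)]
  have h7 : (7 : ℝ) ≤ (n : ℝ) := by exact_mod_cast hn
  have hpos : (0 : ℝ) < ((n : ℝ) - 4) ^ 2 := by nlinarith
  rw [div_le_iff₀ hpos] at h1
  nlinarith [sq_nonneg a]

end PartI

section NegIdx

lemma negIdx_eq_of {V : Type*} [NormedAddCommGroup V] [InnerProductSpace ℝ V]
    [FiniteDimensional ℝ V] {T : V →ₗ[ℝ] V} {d : ℕ}
    (hex : ∃ U : Submodule ℝ V, finrank ℝ U = d ∧ ∀ x ∈ U, x ≠ 0 → ⟪T x, x⟫ < 0)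
    (hub : ∀ U : Submodule ℝ V, (∀ x ∈ U, x ≠ 0 → ⟪T x, x⟫ < 0) → finrank ℝ U ≤ d) :
    negIdx T = d := by
  have hb : ∀ d' ∈ {d | ∃ U : Submodule ℝ V, finrank ℝ U = d ∧
      ∀ x ∈ U, x ≠ 0 → ⟪T x, x⟫ < 0}, d' ≤ d := by
    rintro d' ⟨U, hU, hneg⟩
    exact hU ▸ hub U hneg
  exact le_antisymm (csSup_le ⟨d, hex⟩ hb) (le_csSup ⟨d, hb⟩ hex)

lemma disjoint_dim {V : Type*} [NormedAddCommGroup V] [InnerProductSpace ℝ V]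
    [FiniteDimensional ℝ V] (T : V →ₗ[ℝ] V) (U P : Submodule ℝ V)
    (hU : ∀ x ∈ U, x ≠ 0 → ⟪T x, x⟫ < 0) (hP : ∀ x ∈ P, x ≠ 0 → 0 < ⟪T x, x⟫) :
    finrank ℝ U + finrank ℝ P ≤ finrank ℝ V := by
  have hUP : U ⊓ P = ⊥ := by
    rw [Submodule.eq_bot_iff]
    intro x hx
    by_contra hx0
    exact absurd (hU x hx.1 hx0) (not_lt.2 (le_of_lt (hP x hx.2 hx0)))
  have h := Submodule.finrank_sup_add_finrank_inf_eq U P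
  rw [hUP, finrank_bot, add_zero] at h
  rw [← h]
  exact Submodule.finrank_le _

/-- Restriction of coordinates to a subtype, as a linear map. -/
def restr (n : ℕ) (p : Fin n → Prop) [DecidablePred p] :
    EuclideanSpace ℝ (Fin n) →ₗ[ℝ] ({i // p i} → ℝ) :=
  (LinearMap.funLeft ℝ ℝ (Subtype.val : {i // p i} → Fin n)).comp
    (WithLp.linearEquiv 2 ℝ (Fin n → ℝ)).toLinearMap

lemma mem_ker_restr (n : ℕ) (p : Fin n → Prop) [DecidablePred p]
    (x : EuclideanSpace ℝ (Fin n)) :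
    x ∈ LinearMap.ker (restr n p) ↔ ∀ i : Fin n, p i → x i = 0 := by
  constructor
  · intro h i hi
    exact congrFun (LinearMap.mem_ker.1 h) ⟨i, hi⟩
  · intro h
    exact LinearMap.mem_ker.2 (funext fun j => h j.1 j.2)

lemma restr_surj (n : ℕ) (p : Fin n → Prop) [DecidablePred p] :
    Function.Surjective (restr n p) := by
  intro g
  refine ⟨(WithLp.equiv 2 _).symm (fun i => if h : p i then g ⟨i, h⟩ else 0), ?_⟩
  funext j
  show (if h : p j.1 then g ⟨j.1, h⟩ else 0) = g j
  rw [dif_pos j.2]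

lemma finrank_ker_restr (n : ℕ) (p : Fin n → Prop) [DecidablePred p] :
    finrank ℝ (LinearMap.ker (restr n p)) = n - Fintype.card {i // p i} := by
  have h := LinearMap.finrank_range_add_finrank_ker (restr n p)
  rw [LinearMap.range_eq_top.2 (restr_surj n p), finrank_top,
    Module.finrank_fintype_fun_eq_card, finrank_euclideanSpace_fin] at h
  omega

lemma sum_dvec_on_neg (n : ℕ) (a : ℝ) (x : EuclideanSpace ℝ (Fin n))
    (hx : ∀ i : Fin n, (i : ℕ) < 2 → x i = 0) :
    ∑ i, dvec n a i * x i * x i = -a * ⟪x, x⟫ := by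
  simp only [PiLp.inner_apply, RCLike.inner_apply, conj_trivial, Finset.mul_sum]
  refine Finset.sum_congr rfl fun i _ => ?_
  by_cases h : (i : ℕ) < 2
  · rw [hx i h]; ring
  · simp [dvec, h]; ring

lemma sum_dvec_on_pos (n : ℕ) (a : ℝ) (x : EuclideanSpace ℝ (Fin n))
    (hx : ∀ i : Fin n, ¬ (i : ℕ) < 2 → x i = 0) :
    ∑ i, dvec n a i * x i * x i = a * ⟪x, x⟫ := by
  simp only [PiLp.inner_apply, RCLike.inner_apply, conj_trivial, Finset.mul_sum]
  refine Finset.sum_congr rfl fun i _ => ?_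
  by_cases h : (i : ℕ) < 2
  · simp [dvec, h]; ring
  · rw [hx i h]; ring

lemma finrank_Kneg (n : ℕ) (hn : 2 ≤ n) :
    finrank ℝ (LinearMap.ker (restr n (fun i => (i : ℕ) < 2))) = n - 2 := by
  rw [finrank_ker_restr, card_lt_two n hn]

lemma finrank_Kpos (n : ℕ) (hn : 2 ≤ n) :
    finrank ℝ (LinearMap.ker (restr n (fun i => ¬ (i : ℕ) < 2))) = 2 := by
  rw [finrank_ker_restr, Fintype.card_subtype_compl, Fintype.card_fin, card_lt_two n hn]
  omega

end NegIdx

section Cases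

lemma inner_self_pos'' {V : Type*} [NormedAddCommGroup V] [InnerProductSpace ℝ V]
    {x : V} (hx : x ≠ 0) : (0 : ℝ) < ⟪x, x⟫ :=
  lt_of_le_of_ne real_inner_self_nonneg (fun h => hx (inner_self_eq_zero.1 h.symm))

lemma negIdx_of_pos {n : ℕ} {a c : ℝ} (hn : 7 ≤ n) (ha : 0 < a)
    (S : EuclideanSpace ℝ (Fin n) →ₗ[ℝ] EuclideanSpace ℝ (Fin n))
    (hS : ∀ x, ⟪S x, x⟫ = (∑ i, dvec n a i * x i * x i) * c) (hc : 0 < c) :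
    negIdx S = n - 2 := by
  apply negIdx_eq_of
  · refine ⟨LinearMap.ker (restr n (fun i => (i : ℕ) < 2)), finrank_Kneg n (by omega), ?_⟩
    intro x hx hx0
    rw [hS, sum_dvec_on_neg n a x ((mem_ker_restr _ _ _).1 hx)]
    have hxx : (0 : ℝ) < ⟪x, x⟫ := inner_self_pos'' hx0
    nlinarith [mul_pos (mul_pos ha hxx) hc]
  · intro U hU
    have hP : ∀ x ∈ LinearMap.ker (restr n (fun i => ¬ (i : ℕ) < 2)), x ≠ 0 →
        (0 : ℝ) < ⟪S x, x⟫ := by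
      intro x hx hx0
      rw [hS, sum_dvec_on_pos n a x ((mem_ker_restr _ _ _).1 hx)]
      have hxx : (0 : ℝ) < ⟪x, x⟫ := inner_self_pos'' hx0
      nlinarith [mul_pos (mul_pos ha hxx) hc]
    have hb := disjoint_dim S U _ hU hP
    rw [finrank_Kpos n (by omega), finrank_euclideanSpace_fin] at hb
    omega

lemma negIdx_of_neg {n : ℕ} {a c : ℝ} (hn : 7 ≤ n) (ha : 0 < a)
    (S : EuclideanSpace ℝ (Fin n) →ₗ[ℝ] EuclideanSpace ℝ (Fin n))
    (hS : ∀ x, ⟪S x, x⟫ = (∑ i, dvec n a i * x i * x i) * c) (hc : c < 0) :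
    negIdx S = 2 := by
  apply negIdx_eq_of
  · refine ⟨LinearMap.ker (restr n (fun i => ¬ (i : ℕ) < 2)), finrank_Kpos n (by omega), ?_⟩
    intro x hx hx0
    rw [hS, sum_dvec_on_pos n a x ((mem_ker_restr _ _ _).1 hx)]
    have hxx : (0 : ℝ) < ⟪x, x⟫ := inner_self_pos'' hx0
    nlinarith [mul_pos (mul_pos ha hxx) (neg_pos.2 hc)]
  · intro U hU
    have hP : ∀ x ∈ LinearMap.ker (restr n (fun i => (i : ℕ) < 2)), x ≠ 0 →
        (0 : ℝ) < ⟪S x, x⟫ := by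
      intro x hx hx0
      rw [hS, sum_dvec_on_neg n a x ((mem_ker_restr _ _ _).1 hx)]
      have hxx : (0 : ℝ) < ⟪x, x⟫ := inner_self_pos'' hx0
      nlinarith [mul_pos (mul_pos ha hxx) (neg_pos.2 hc)]
    have hb := disjoint_dim S U _ hU hP
    rw [finrank_Kneg n (by omega), finrank_euclideanSpace_fin] at hb
    omega

lemma negIdx_of_zero {n : ℕ} {a c : ℝ}
    (S : EuclideanSpace ℝ (Fin n) →ₗ[ℝ] EuclideanSpace ℝ (Fin n))
    (hS : ∀ x, ⟪S x, x⟫ = (∑ i, dvec n a i * x i * x i) * c) (hc : c = 0) :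
    negIdx S = 0 := by
  apply negIdx_eq_of
  · exact ⟨⊥, finrank_bot ℝ _, fun x hx hx0 => absurd ((Submodule.mem_bot ℝ).1 hx) hx0⟩
  · intro U hU
    by_contra h
    have hU0 : U ≠ ⊥ := by
      intro hb
      rw [hb, finrank_bot] at h
      omega
    obtain ⟨x, hx, hx0⟩ := Submodule.exists_mem_ne_zero_of_ne_bot hU0
    have hlt := hU x hx hx0
    rw [hS, hc, mul_zero] at hlt
    exact lt_irrefl _ hlt

lemma sphere_coord_zero_iff (u : EuclideanSpace ℝ (Fin 2)) (hu : ‖u‖ = 1) :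
    u 0 = 0 ↔ u = EuclideanSpace.single (1 : Fin 2) (1 : ℝ) ∨
      u = -EuclideanSpace.single (1 : Fin 2) (1 : ℝ) := by
  constructor
  · intro h0
    have hsum : u 0 * u 0 + u 1 * u 1 = 1 := by
      have h := real_inner_self_eq_norm_mul_norm (x := u)
      rw [hu, one_mul] at h
      simp only [PiLp.inner_apply, Fin.sum_univ_two, RCLike.inner_apply, conj_trivial] at h
      linarith
    rw [h0, mul_zero, zero_add] at hsum
    rcases mul_self_eq_one_iff.1 hsum with h1 | h1
    · left
      apply PiLp.ext
      intro i
      fin_cases i <;> simp [h0, h1, EuclideanSpace.single_apply]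
    · right
      apply PiLp.ext
      intro i
      fin_cases i <;> simp [h0, h1, EuclideanSpace.single_apply]
  · rintro (h | h) <;> rw [h] <;> simp [EuclideanSpace.single_apply]

lemma det_Mlin (n : ℕ) (a : ℝ) :
    LinearMap.det (Mlin n a) = ∏ i, dvec n a i := by
  rw [Mlin, Matrix.toEuclideanLin_eq_toLin, LinearMap.det_toLin, Matrix.det_diagonal]

lemma abs_det_smul_Mlin (n : ℕ) {a : ℝ} (ha : 0 < a) (c : ℝ) :
    |LinearMap.det (c • Mlin n a)| = |c| ^ n * a ^ n := by
  rw [LinearMap.det_smul, det_Mlin, abs_mul, abs_pow, finrank_euclideanSpace_fin,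
    Finset.abs_prod]
  congr 1
  rw [Finset.prod_congr rfl fun i _ => abs_dvec n ha i, Finset.prod_const,
    Finset.card_univ, Fintype.card_fin]

end Cases

section Meas

open MeasureTheory Metric
open scoped Pointwise

lemma cont_coord : Continuous fun u : sphere (0 : EuclideanSpace ℝ (Fin 2)) 1 =>
    (u : EuclideanSpace ℝ (Fin 2)) 0 :=
  (continuous_apply (0 : Fin 2)).comp (Continuous.comp (PiLp.continuous_ofLp 2 _) continuous_subtype_val)

lemma meas_Z : MeasurableSet {u : sphere (0 : EuclideanSpace ℝ (Fin 2)) 1 |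
    (u : EuclideanSpace ℝ (Fin 2)) 0 = 0} :=
  cont_coord.measurable (measurableSet_singleton 0)

lemma measure_Z_zero : volume.toSphere {u : sphere (0 : EuclideanSpace ℝ (Fin 2)) 1 |
    (u : EuclideanSpace ℝ (Fin 2)) 0 = 0} = 0 := by
  rw [Measure.toSphere_apply' _ meas_Z]
  have hsub : Set.Ioo (0 : ℝ) 1 •
      ((↑) '' {u : sphere (0 : EuclideanSpace ℝ (Fin 2)) 1 |
        (u : EuclideanSpace ℝ (Fin 2)) 0 = 0}) ⊆
      (LinearMap.ker (restr 2 (fun i : Fin 2 => (i : ℕ) < 1)) :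
        Set (EuclideanSpace ℝ (Fin 2))) := by
    rintro z hz
    rw [Set.mem_smul] at hz
    obtain ⟨r, x, hr, hx, rfl⟩ := hz
    obtain ⟨u, hu, rfl⟩ := hx
    refine Submodule.smul_mem _ r ?_
    rw [mem_ker_restr]
    intro i hi
    have : i = (0 : Fin 2) := by omega
    rw [this]
    exact hu
  rw [measure_mono_null hsub (Measure.addHaar_submodule _ _ ?_), mul_zero]
  intro htop
  have h1 : EuclideanSpace.single (0 : Fin 2) (1 : ℝ) ∈
      LinearMap.ker (restr 2 (fun i : Fin 2 => (i : ℕ) < 1)) := by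
    rw [htop]; trivial
  rw [mem_ker_restr] at h1
  have := h1 0 (by norm_num)
  rw [EuclideanSpace.single_apply] at this
  simp at this

lemma measure_univ_pos :
    0 < volume.toSphere (Set.univ : Set (sphere (0 : EuclideanSpace ℝ (Fin 2)) 1)) := by
  rw [Measure.toSphere_apply_univ]
  apply ENNReal.mul_pos
  · simp [finrank_euclideanSpace_fin]
  · exact (measure_ball_pos _ _ one_pos).ne'

end Meas

end Stmt10Aux

/-- the counterexample showing the Weyl/curvature term is essential.
Let `n ≥ 7`, `V = ℝⁿ`, `W = ℝ²`, `a > 0` and `β(x,y) = ⟨Ax,y⟩ ξ₁` with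
`A = diag(a,a,−a,…,−a)`. Then (i) for every `λ ∈ [n/(n−4)², 1)` one has
`‖β‖² − λ|trace β|² ≤ 0`, hence `(‖β‖² − λ|trace β|²)₊ = 0`; (ii)
`Φ(β) = S¹ ∖ {±ξ₂}`; (iii) `∫_{Φ(β)} |det β^♯(u)| dS_u > 0`. In particular, the inequality
`((‖β‖² − λ|trace β|²)₊)² ≥ ε (∫_{Φ(β)} |det β^♯(u)| dS_u)^{4/n}` fails for every `ε > 0`. -/
theorem stmt10 (n : ℕ) (hn : 7 ≤ n) (a : ℝ) (ha : 0 < a)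
    (T : EuclideanSpace ℝ (Fin 2) →
        (EuclideanSpace ℝ (Fin n) →ₗ[ℝ] EuclideanSpace ℝ (Fin n)))
    (hT : ∀ u x y, ⟪T u x, y⟫ = ⟪βex n a x y, u⟫) :
    -- (i)
    (∀ lam : ℝ, (n : ℝ) / ((n : ℝ) - 4) ^ 2 ≤ lam → lam < 1 →
      bnormSq (βex n a) - lam * ‖btrace (βex n a)‖ ^ 2 ≤ 0 ∧
        max (bnormSq (βex n a) - lam * ‖btrace (βex n a)‖ ^ 2) 0 = 0) ∧
    -- (ii) `Φ(β) = S¹ ∖ {ξ₂, −ξ₂}`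
    ({u : Metric.sphere (0 : EuclideanSpace ℝ (Fin 2)) 1 |
        2 ≤ negIdx (T ↑u) ∧ negIdx (T ↑u) ≤ n - 2} =
      {u : Metric.sphere (0 : EuclideanSpace ℝ (Fin 2)) 1 |
        (u : EuclideanSpace ℝ (Fin 2)) ≠ EuclideanSpace.single (1 : Fin 2) (1 : ℝ) ∧
        (u : EuclideanSpace ℝ (Fin 2)) ≠ -EuclideanSpace.single (1 : Fin 2) (1 : ℝ)}) ∧
    -- (iii)
    (0 < ∫ u in {u : Metric.sphere (0 : EuclideanSpace ℝ (Fin 2)) 1 |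
          2 ≤ negIdx (T ↑u) ∧ negIdx (T ↑u) ≤ n - 2},
        |LinearMap.det (T ↑u)| ∂(volume.toSphere)) ∧
    -- the pinching inequality fails for every `ε > 0`
    (∀ ε : ℝ, 0 < ε → ∀ lam : ℝ, (n : ℝ) / ((n : ℝ) - 4) ^ 2 ≤ lam → lam < 1 →
      ¬ (ε * (∫ u in {u : Metric.sphere (0 : EuclideanSpace ℝ (Fin 2)) 1 |
              2 ≤ negIdx (T ↑u) ∧ negIdx (T ↑u) ≤ n - 2},
            |LinearMap.det (T ↑u)| ∂(volume.toSphere)) ^ ((4 : ℝ) / n) ≤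
          (max (bnormSq (βex n a) - lam * ‖btrace (βex n a)‖ ^ 2) 0) ^ 2)) := by
 classical
  have hform : ∀ (u : EuclideanSpace ℝ (Fin 2)) (x : EuclideanSpace ℝ (Fin n)),
      ⟪T u x, x⟫ = (∑ i, dvec n a i * x i * x i) * u 0 := fun u x => by
    rw [hT u x x, Stmt10Aux.inner_beta]
  have hmaster : ∀ u : Metric.sphere (0 : EuclideanSpace ℝ (Fin 2)) 1,
      (2 ≤ negIdx (T ↑u) ∧ negIdx (T ↑u) ≤ n - 2) ↔
        (u : EuclideanSpace ℝ (Fin 2)) 0 ≠ 0 := by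
    intro u
    rcases lt_trichotomy ((u : EuclideanSpace ℝ (Fin 2)) 0) 0 with hc | hc | hc
    · rw [Stmt10Aux.negIdx_of_neg hn ha (T ↑u) (hform ↑u) hc]
      exact ⟨fun _ => ne_of_lt hc, fun _ => ⟨le_refl 2, by omega⟩⟩
    · rw [Stmt10Aux.negIdx_of_zero (T ↑u) (hform ↑u) hc]
      exact ⟨fun h => by omega, fun h => absurd hc h⟩
    · rw [Stmt10Aux.negIdx_of_pos hn ha (T ↑u) (hform ↑u) hc]
      exact ⟨fun _ => ne_of_gt hc, fun _ => ⟨by omega, le_refl _⟩⟩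
  have hsetS : {u : Metric.sphere (0 : EuclideanSpace ℝ (Fin 2)) 1 |
      2 ≤ negIdx (T ↑u) ∧ negIdx (T ↑u) ≤ n - 2} =
      {u : Metric.sphere (0 : EuclideanSpace ℝ (Fin 2)) 1 |
        (u : EuclideanSpace ℝ (Fin 2)) 0 ≠ 0} := Set.ext fun u => hmaster u
  have hi : ∀ lam : ℝ, (n : ℝ) / ((n : ℝ) - 4) ^ 2 ≤ lam → lam < 1 →
      bnormSq (βex n a) - lam * ‖btrace (βex n a)‖ ^ 2 ≤ 0 ∧
        max (bnormSq (βex n a) - lam * ‖btrace (βex n a)‖ ^ 2) 0 = 0 := by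
    intro lam h1 _
    have h := Stmt10Aux.partI n hn a lam h1
    exact ⟨h, max_eq_right h⟩
  have hTu : ∀ u : EuclideanSpace ℝ (Fin 2), T u = u 0 • Stmt10Aux.Mlin n a := by
    intro u
    apply LinearMap.ext
    intro x
    apply ext_inner_right ℝ
    intro y
    rw [hT u x y, Stmt10Aux.inner_beta, LinearMap.smul_apply, real_inner_smul_left,
      Stmt10Aux.inner_Mlin_left]
    ring
  have hdet : ∀ u : Metric.sphere (0 : EuclideanSpace ℝ (Fin 2)) 1,
      |LinearMap.det (T ↑u)| = |(u : EuclideanSpace ℝ (Fin 2)) 0| ^ n * a ^ n := by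
    intro u
    rw [hTu ↑u, Stmt10Aux.abs_det_smul_Mlin n ha]
  have hii : {u : Metric.sphere (0 : EuclideanSpace ℝ (Fin 2)) 1 |
        2 ≤ negIdx (T ↑u) ∧ negIdx (T ↑u) ≤ n - 2} =
      {u : Metric.sphere (0 : EuclideanSpace ℝ (Fin 2)) 1 |
        (u : EuclideanSpace ℝ (Fin 2)) ≠ EuclideanSpace.single (1 : Fin 2) (1 : ℝ) ∧
        (u : EuclideanSpace ℝ (Fin 2)) ≠ -EuclideanSpace.single (1 : Fin 2) (1 : ℝ)} := by
    rw [hsetS]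
    ext u
    have hu : ‖(u : EuclideanSpace ℝ (Fin 2))‖ = 1 := by
      have h := u.2
      rwa [mem_sphere_zero_iff_norm] at h
    simp only [Set.mem_setOf_eq, ne_eq]
    rw [Stmt10Aux.sphere_coord_zero_iff _ hu]
    exact not_or
  have hiii : 0 < ∫ u in {u : Metric.sphere (0 : EuclideanSpace ℝ (Fin 2)) 1 |
        2 ≤ negIdx (T ↑u) ∧ negIdx (T ↑u) ≤ n - 2},
      |LinearMap.det (T ↑u)| ∂(volume.toSphere) := by
    rw [hsetS]
    have hfun : (fun u : Metric.sphere (0 : EuclideanSpace ℝ (Fin 2)) 1 =>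
        |LinearMap.det (T ↑u)|) =
        fun u : Metric.sphere (0 : EuclideanSpace ℝ (Fin 2)) 1 =>
          |(u : EuclideanSpace ℝ (Fin 2)) 0| ^ n * a ^ n := funext hdet
    rw [hfun]
    set μ := (volume : Measure (EuclideanSpace ℝ (Fin 2))).toSphere with hμ
    haveI : IsFiniteMeasureOnCompacts μ :=
      ⟨fun K _ => lt_of_le_of_lt (measure_mono (Set.subset_univ K)) (measure_lt_top _ _)⟩
    have hcont : Continuous fun u : Metric.sphere (0 : EuclideanSpace ℝ (Fin 2)) 1 =>
        |(u : EuclideanSpace ℝ (Fin 2)) 0| ^ n * a ^ n :=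
      (Stmt10Aux.cont_coord.abs.pow n).mul continuous_const
    refine (setIntegral_pos_iff_support_of_nonneg_ae ?_ ?_).2 ?_
    · exact Filter.Eventually.of_forall fun u =>
        mul_nonneg (pow_nonneg (abs_nonneg _) n) (pow_nonneg ha.le n)
    · exact (hcont.continuousOn.integrableOn_compact isCompact_univ).mono_set
        (Set.subset_univ _)
    · have hsub : {u : Metric.sphere (0 : EuclideanSpace ℝ (Fin 2)) 1 |
          (u : EuclideanSpace ℝ (Fin 2)) 0 ≠ 0} ⊆
          (Function.support fun u : Metric.sphere (0 : EuclideanSpace ℝ (Fin 2)) 1 =>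
            |(u : EuclideanSpace ℝ (Fin 2)) 0| ^ n * a ^ n) ∩
          {u : Metric.sphere (0 : EuclideanSpace ℝ (Fin 2)) 1 |
            (u : EuclideanSpace ℝ (Fin 2)) 0 ≠ 0} := fun u hu =>
        ⟨ne_of_gt (mul_pos (pow_pos (abs_pos.2 hu) n) (pow_pos ha n)), hu⟩
      refine lt_of_lt_of_le ?_ (measure_mono hsub)
      have hcompl : {u : Metric.sphere (0 : EuclideanSpace ℝ (Fin 2)) 1 |
          (u : EuclideanSpace ℝ (Fin 2)) 0 ≠ 0} =
          {u : Metric.sphere (0 : EuclideanSpace ℝ (Fin 2)) 1 |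
            (u : EuclideanSpace ℝ (Fin 2)) 0 = 0}ᶜ := rfl
      rw [hcompl, measure_compl Stmt10Aux.meas_Z (measure_ne_top _ _),
        Stmt10Aux.measure_Z_zero, tsub_zero]
      exact Stmt10Aux.measure_univ_pos
  refine ⟨hi, hii, hiii, ?_⟩
  intro ε hε lam h1 h2 hcon
  rw [(hi lam h1 h2).2] at hcon
  have hIpos : (0 : ℝ) < (∫ u in {u : Metric.sphere (0 : EuclideanSpace ℝ (Fin 2)) 1 |
        2 ≤ negIdx (T ↑u) ∧ negIdx (T ↑u) ≤ n - 2},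
      |LinearMap.det (T ↑u)| ∂(volume.toSphere)) ^ ((4 : ℝ) / n) :=
    Real.rpow_pos_of_pos hiii _
  nlinarith [mul_pos hε hIpos]
end
end
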